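/- arXiv:2504.01713 — 9 statements merged into one kernel-verified Lean document; each statement's English description precedes it below -/
import Mathlib

section
/- Alice wins if and only if there exists a point x ∈ ℝ^d such that every affine hyperplane through x contains at most half the points of S in each of its two open sides, i.e. 2·|H⁺ ∩ S| ≤ |S| and 2·|H⁻ ∩ S| ≤ |S| for every affine hyperplane H with x ∈ H; moreover, any such point x is a winning point for Alice. -/
open scoped RealInnerProductSpace

/-- `claims S a b` is the number of voters in `S` strictly closer to `a` than to `b`.
Thus `V_A(a,b) = claims S a b` and `V_B(a,b) = claims S b a`. -/
noncomputable def claims {d : ℕ} (S : Finset (EuclideanSpace ℝ (Fin d)))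
    (a b : EuclideanSpace ℝ (Fin d)) : ℕ :=
  (S.filter fun x => dist a x < dist b x).card

/-- `a` is a winning point for Alice: `V_A(a,b) ≥ V_B(a,b)` for every `b`. -/
def IsWinningPoint {d : ℕ} (S : Finset (EuclideanSpace ℝ (Fin d)))
    (a : EuclideanSpace ℝ (Fin d)) : Prop :=
  ∀ b : EuclideanSpace ℝ (Fin d), claims S b a ≤ claims S a b

lemma sq_diff {d : ℕ} (a c y : EuclideanSpace ℝ (Fin d)) (t : ℝ) :
    dist (a + t • c) y ^ 2 - dist a y ^ 2 = t * (2 * ⟪a, c⟫ + t * ‖c‖ ^ 2 - 2 * ⟪y, c⟫) := by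
  rw [dist_eq_norm, dist_eq_norm]
  rw [@norm_sub_sq_real, @norm_sub_sq_real]
  rw [@norm_add_sq_real, inner_add_left, real_inner_smul_left, norm_smul]
  rw [real_inner_smul_right, real_inner_comm c y]
  simp only [Real.norm_eq_abs, mul_pow, sq_abs]
  ring

lemma closer_iff {d : ℕ} (a c y : EuclideanSpace ℝ (Fin d)) (t : ℝ) (ht : 0 < t) :
    dist (a + t • c) y < dist a y ↔ ⟪a, c⟫ + t * ‖c‖ ^ 2 / 2 < ⟪y, c⟫ := by
  have h := sq_diff a c y t
  have h1 := dist_nonneg (x := a + t • c) (y := y)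
  have h2 := dist_nonneg (x := a) (y := y)
  constructor
  · intro hlt; nlinarith
  · intro hlt; nlinarith

lemma farther_iff {d : ℕ} (a c y : EuclideanSpace ℝ (Fin d)) (t : ℝ) (ht : 0 < t) :
    dist a y < dist (a + t • c) y ↔ ⟪y, c⟫ < ⟪a, c⟫ + t * ‖c‖ ^ 2 / 2 := by
  have h := sq_diff a c y t
  have h1 := dist_nonneg (x := a + t • c) (y := y)
  have h2 := dist_nonneg (x := a) (y := y)
  constructor
  · intro hlt; nlinarith
  · intro hlt; nlinarith

lemma win_to_cond {d : ℕ} (S : Finset (EuclideanSpace ℝ (Fin d)))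
    (a : EuclideanSpace ℝ (Fin d)) (hw : IsWinningPoint S a)
    (c : EuclideanSpace ℝ (Fin d)) (hc : c ≠ 0) :
    2 * (S.filter fun y => ⟪a, c⟫ < ⟪y, c⟫).card ≤ S.card := by
  classical
  set lam := ⟪a, c⟫ with hlam
  by_cases hP : (S.filter fun y => lam < ⟪y, c⟫).Nonempty
  · obtain ⟨y0, hy0, hmin⟩ := Finset.exists_min_image _ (fun y => ⟪y, c⟫) hP
    have hy0lt : lam < ⟪y0, c⟫ := (Finset.mem_filter.1 hy0).2
    have hc2 : (0:ℝ) < ‖c‖ ^ 2 := by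
      have : 0 < ‖c‖ := norm_pos_iff.2 hc
      positivity
    set t : ℝ := (⟪y0, c⟫ - lam) / ‖c‖ ^ 2 with hts
    have ht : 0 < t := div_pos (by linarith) hc2
    have hthr : lam + t * ‖c‖ ^ 2 / 2 = lam + (⟪y0, c⟫ - lam) / 2 := by
      rw [hts]; field_simp
    have hthr1 : lam < lam + t * ‖c‖ ^ 2 / 2 := by rw [hthr]; linarith
    have hthr2 : lam + t * ‖c‖ ^ 2 / 2 < ⟪y0, c⟫ := by rw [hthr]; linarith
    have hb := hw (a + t • c)
    have e1 : claims S (a + t • c) a = (S.filter fun y => lam < ⟪y, c⟫).card := by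
      unfold claims
      congr 1
      apply Finset.filter_congr
      intro y _
      rw [closer_iff a c y t ht]
      constructor
      · intro h; linarith
      · intro h
        have := hmin y (Finset.mem_filter.2 ⟨by assumption, h⟩)
        linarith
    have e2 : claims S a (a + t • c)
        ≤ (S.filter fun y => ¬ (lam < ⟪y, c⟫)).card := by
      unfold claims
      apply Finset.card_le_card
      intro y hy
      rw [Finset.mem_filter] at hy ⊢
      refine ⟨hy.1, ?_⟩
      intro hlt
      have h1 := (farther_iff a c y t ht).1 hy.2
      have := hmin y (Finset.mem_filter.2 ⟨hy.1, hlt⟩)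
      linarith
    have hsum := Finset.card_filter_add_card_filter_not
      (s := S) (p := fun y => lam < ⟪y, c⟫)
    rw [e1] at hb
    omega
  · rw [Finset.not_nonempty_iff_eq_empty.1 hP]
    simp

lemma cond_to_win {d : ℕ} (S : Finset (EuclideanSpace ℝ (Fin d)))
    (x : EuclideanSpace ℝ (Fin d))
    (hx : ∀ (c : EuclideanSpace ℝ (Fin d)) (lam : ℝ), c ≠ 0 → ⟪x, c⟫ = lam →
          2 * (S.filter fun y => lam < ⟪y, c⟫).card ≤ S.card ∧
          2 * (S.filter fun y => ⟪y, c⟫ < lam).card ≤ S.card) :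
    IsWinningPoint S x := by
  classical
  intro b
  by_cases hbx : b = x
  · subst hbx; exact le_refl _
  · set c := b - x with hcs
    have hc : c ≠ 0 := sub_ne_zero.2 hbx
    have hbv : b = x + (1:ℝ) • c := by rw [hcs]; simp
    set lam := ⟪x, c⟫ with hlam
    have hc2 : (0:ℝ) < ‖c‖ ^ 2 := by
      have : 0 < ‖c‖ := norm_pos_iff.2 hc
      positivity
    obtain ⟨h1, _⟩ := hx c lam hc rfl
    have e1 : claims S b x ≤ (S.filter fun y => lam < ⟪y, c⟫).card := by
      unfold claims
      apply Finset.card_le_card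
      intro y hy
      rw [Finset.mem_filter] at hy ⊢
      refine ⟨hy.1, ?_⟩
      have := (closer_iff x c y 1 one_pos).1 (by rw [← hbv]; exact hy.2)
      linarith
    have e2 : (S.filter fun y => ¬ (lam < ⟪y, c⟫)).card ≤ claims S x b := by
      unfold claims
      apply Finset.card_le_card
      intro y hy
      rw [Finset.mem_filter] at hy ⊢
      refine ⟨hy.1, ?_⟩
      rw [hbv, farther_iff x c y 1 one_pos]
      push_neg at hy
      have := hy.2
      linarith
    have hsum := Finset.card_filter_add_card_filter_not
      (s := S) (p := fun y => lam < ⟪y, c⟫)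
    omega


/-- Alice wins iff there is a point `x` such that every affine hyperplane
`{y | ⟪y,c⟫ = lam}` through `x` has at most half the points of `S` on each open side;
moreover any such `x` is a winning point for Alice. -/
theorem stmt0 (d : ℕ) (hd : 1 ≤ d) (S : Finset (EuclideanSpace ℝ (Fin d))) :
    ((∃ a, IsWinningPoint S a) ↔
      ∃ x : EuclideanSpace ℝ (Fin d),
        ∀ (c : EuclideanSpace ℝ (Fin d)) (lam : ℝ), c ≠ 0 → ⟪x, c⟫ = lam →
          2 * (S.filter fun y => lam < ⟪y, c⟫).card ≤ S.card ∧
          2 * (S.filter fun y => ⟪y, c⟫ < lam).card ≤ S.card) ∧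
    (∀ x : EuclideanSpace ℝ (Fin d),
      (∀ (c : EuclideanSpace ℝ (Fin d)) (lam : ℝ), c ≠ 0 → ⟪x, c⟫ = lam →
          2 * (S.filter fun y => lam < ⟪y, c⟫).card ≤ S.card ∧
          2 * (S.filter fun y => ⟪y, c⟫ < lam).card ≤ S.card) →
        IsWinningPoint S x) := by
  classical
  constructor
  · constructor
    · rintro ⟨a, ha⟩
      refine ⟨a, fun c lam hc hlam => ?_⟩
      subst hlam
      refine ⟨win_to_cond S a ha c hc, ?_⟩
      have hneg := win_to_cond S a ha (-c) (neg_ne_zero.2 hc)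
      have heq : (S.filter fun y => ⟪a, -c⟫ < ⟪y, -c⟫)
          = (S.filter fun y => ⟪y, c⟫ < ⟪a, c⟫) := by
        apply Finset.filter_congr
        intro y _
        rw [inner_neg_right, inner_neg_right]
        constructor <;> intro <;> linarith
      rw [heq] at hneg
      exact hneg
    · rintro ⟨x, hx⟩
      exact ⟨x, cond_to_win S x hx⟩
  · exact fun x hx => cond_to_win S x hx
end

section
/- Suppose the points of S do not all lie on a single line. Then Alice has at most one winning point: if a₁ and a₂ are both winning points for Alice, then a₁ = a₂. -/
open scoped RealInnerProductSpace

private lemma dist_sq_eq {d : ℕ} (a v x : EuclideanSpace ℝ (Fin d)) (ε : ℝ) :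
    dist (a + ε • v) x ^ 2 = dist a x ^ 2 - 2 * ε * ⟪x - a, v⟫ + ε ^ 2 * ‖v‖ ^ 2 := by
  rw [dist_eq_norm, dist_eq_norm]
  have h : a + ε • v - x = (a - x) + ε • v := by abel
  rw [h, norm_add_sq_real]
  have h2 : ⟪a - x, v⟫ = -⟪x - a, v⟫ := by
    rw [← neg_sub x a, inner_neg_left]
  have h3 : ‖ε • v‖ ^ 2 = ε ^ 2 * ‖v‖ ^ 2 := by
    rw [norm_smul, mul_pow, Real.norm_eq_abs, sq_abs]
  rw [real_inner_smul_right, h2, h3]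
  ring

private lemma dist_lt_iff' {d : ℕ} (a v x : EuclideanSpace ℝ (Fin d)) {ε : ℝ} (hε : 0 < ε) :
    dist (a + ε • v) x < dist a x ↔ ε * ‖v‖ ^ 2 / 2 < ⟪x - a, v⟫ := by
  have h := dist_sq_eq a v x ε
  have d1 : 0 ≤ dist (a + ε • v) x := dist_nonneg
  have d2 : 0 ≤ dist a x := dist_nonneg
  constructor
  · intro hlt
    have hsq : dist (a + ε • v) x ^ 2 < dist a x ^ 2 := by nlinarith
    nlinarith
  · intro hlt
    by_contra hcon
    push_neg at hcon
    have hsq : dist a x ^ 2 ≤ dist (a + ε • v) x ^ 2 := by nlinarith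
    nlinarith

private lemma dist_gt_iff' {d : ℕ} (a v x : EuclideanSpace ℝ (Fin d)) {ε : ℝ} (hε : 0 < ε) :
    dist a x < dist (a + ε • v) x ↔ ⟪x - a, v⟫ < ε * ‖v‖ ^ 2 / 2 := by
  have h := dist_sq_eq a v x ε
  have d1 : 0 ≤ dist (a + ε • v) x := dist_nonneg
  have d2 : 0 ≤ dist a x := dist_nonneg
  constructor
  · intro hlt
    have hsq : dist a x ^ 2 < dist (a + ε • v) x ^ 2 := by nlinarith
    nlinarith
  · intro hlt
    by_contra hcon
    push_neg at hcon
    have hsq : dist (a + ε • v) x ^ 2 ≤ dist a x ^ 2 := by nlinarith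
    nlinarith

/-- Every open halfspace through a winning point contains at most as many
voters as its closed complement. -/
private lemma halfspace_count {d : ℕ} {S : Finset (EuclideanSpace ℝ (Fin d))}
    {a : EuclideanSpace ℝ (Fin d)} (h : IsWinningPoint S a)
    (v : EuclideanSpace ℝ (Fin d)) (hv : v ≠ 0) :
    (S.filter fun x => 0 < ⟪x - a, v⟫).card ≤ (S.filter fun x => ⟪x - a, v⟫ ≤ 0).card := by
  have hv2 : (0:ℝ) < ‖v‖ ^ 2 := by
    have := norm_pos_iff.mpr hv
    positivity
  set T := (S.image fun x => ⟪x - a, v⟫).filter (fun r => 0 < r) with hT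
  set m := (insert (1:ℝ) T).min' (Finset.insert_nonempty _ _) with hm
  have hmpos : 0 < m := by
    have hmem := (insert (1:ℝ) T).min'_mem (Finset.insert_nonempty _ _)
    rw [← hm] at hmem
    rcases Finset.mem_insert.1 hmem with h' | h'
    · rw [h']; norm_num
    · exact (Finset.mem_filter.1 h').2
  have hmle : ∀ x ∈ S, 0 < ⟪x - a, v⟫ → m ≤ ⟪x - a, v⟫ := by
    intro x hx hpos
    apply Finset.min'_le
    exact Finset.mem_insert_of_mem
      (Finset.mem_filter.2 ⟨Finset.mem_image_of_mem _ hx, hpos⟩)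
  set ε := m / ‖v‖ ^ 2 with hε
  have hεpos : 0 < ε := div_pos hmpos hv2
  have key : ε * ‖v‖ ^ 2 / 2 = m / 2 := by
    rw [hε]; field_simp
  have H := h (a + ε • v)
  have e1 : claims S (a + ε • v) a = (S.filter fun x => 0 < ⟪x - a, v⟫).card := by
    unfold claims
    congr 1
    apply Finset.filter_congr
    intro x hx
    rw [dist_lt_iff' a v x hεpos, key]
    constructor
    · intro h'; linarith
    · intro h'; have := hmle x hx h'; linarith
  have e2 : claims S a (a + ε • v) = (S.filter fun x => ⟪x - a, v⟫ ≤ 0).card := by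
    unfold claims
    congr 1
    apply Finset.filter_congr
    intro x hx
    rw [dist_gt_iff' a v x hεpos, key]
    constructor
    · intro h'
      by_contra hcon
      push_neg at hcon
      have := hmle x hx hcon
      linarith
    · intro h'; linarith
  rw [e1] at H
  rw [e2] at H
  exact H

/-- If `a₁` and `a₂` are both winning points, no voter lies strictly between two
parallel hyperplanes through `a₁` and `a₂`. -/
private lemma slab_empty {d : ℕ} {S : Finset (EuclideanSpace ℝ (Fin d))}
    {a₁ a₂ : EuclideanSpace ℝ (Fin d)}
    (h₁ : IsWinningPoint S a₁) (h₂ : IsWinningPoint S a₂)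
    (v : EuclideanSpace ℝ (Fin d)) (hv : 0 < ⟪a₂ - a₁, v⟫)
    {x : EuclideanSpace ℝ (Fin d)} (hx : x ∈ S)
    (h0 : 0 < ⟪x - a₁, v⟫) (h1 : ⟪x - a₁, v⟫ < ⟪a₂ - a₁, v⟫) : False := by
  classical
  have hvne : v ≠ 0 := by
    rintro rfl
    simp at hv
  have hA := halfspace_count h₁ v hvne
  have hB := halfspace_count h₂ (-v) (neg_ne_zero.2 hvne)
  have keyinner : ∀ y : EuclideanSpace ℝ (Fin d),
      ⟪y - a₂, -v⟫ = ⟪a₂ - a₁, v⟫ - ⟪y - a₁, v⟫ := by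
    intro y
    have e : (a₂ - a₁ : EuclideanSpace ℝ (Fin d)) - (y - a₁) = -(y - a₂) := by abel
    rw [inner_neg_right, ← inner_sub_left, e, inner_neg_left]
  set A := S.filter fun y => 0 < ⟪y - a₁, v⟫ with hAdef
  set B := S.filter fun y => 0 < ⟪y - a₂, -v⟫ with hBdef
  have cA : A.card + (S.filter fun y => ⟪y - a₁, v⟫ ≤ 0).card = S.card := by
    have : (S.filter fun y => ⟪y - a₁, v⟫ ≤ 0)
        = S.filter fun y => ¬ (0 < ⟪y - a₁, v⟫) := by
      apply Finset.filter_congr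
      intro y hy
      simp [not_lt]
    rw [this, hAdef]
    exact Finset.card_filter_add_card_filter_not _
  have cB : B.card + (S.filter fun y => ⟪y - a₂, -v⟫ ≤ 0).card = S.card := by
    have : (S.filter fun y => ⟪y - a₂, -v⟫ ≤ 0)
        = S.filter fun y => ¬ (0 < ⟪y - a₂, -v⟫) := by
      apply Finset.filter_congr
      intro y hy
      simp [not_lt]
    rw [this, hBdef]
    exact Finset.card_filter_add_card_filter_not _
  have h2A : 2 * A.card ≤ S.card := by omega
  have h2B : 2 * B.card ≤ S.card := by omega
  have hcover : S ⊆ A ∪ B := by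
    intro y hy
    rcases lt_or_ge 0 ⟪y - a₁, v⟫ with h' | h'
    · exact Finset.mem_union_left _ (Finset.mem_filter.2 ⟨hy, h'⟩)
    · refine Finset.mem_union_right _ (Finset.mem_filter.2 ⟨hy, ?_⟩)
      rw [keyinner y]
      linarith
  have hUnion : (A ∪ B) = S :=
    Finset.Subset.antisymm
      (Finset.union_subset (Finset.filter_subset _ _) (Finset.filter_subset _ _)) hcover
  have hxAB : x ∈ A ∩ B := by
    refine Finset.mem_inter.2 ⟨Finset.mem_filter.2 ⟨hx, h0⟩, Finset.mem_filter.2 ⟨hx, ?_⟩⟩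
    rw [keyinner x]
    linarith
  have hint : 1 ≤ (A ∩ B).card := Finset.card_pos.2 ⟨x, hxAB⟩
  have hcards := Finset.card_union_add_card_inter A B
  rw [hUnion] at hcards
  omega

set_option maxHeartbeats 1000000 in
/-- if the voters are not all collinear, Alice has at most one winning point. -/
theorem stmt1 (d : ℕ) (hd : 1 ≤ d) (S : Finset (EuclideanSpace ℝ (Fin d)))
    (hline : ¬ Collinear ℝ (S : Set (EuclideanSpace ℝ (Fin d))))
    (a₁ a₂ : EuclideanSpace ℝ (Fin d))
    (h₁ : IsWinningPoint S a₁) (h₂ : IsWinningPoint S a₂) :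
    a₁ = a₂ := by
  by_contra hne
  apply hline
  rw [collinear_iff_exists_forall_eq_smul_vadd]
  refine ⟨a₁, a₂ - a₁, ?_⟩
  intro p hp
  rw [Finset.mem_coe] at hp
  set u := a₂ - a₁ with hu
  have hune : u ≠ 0 := sub_ne_zero.2 (Ne.symm hne)
  have hn2 : (0:ℝ) < ‖u‖ ^ 2 := by
    have := norm_pos_iff.mpr hune
    positivity
  have huu : ⟪u, u⟫ = ‖u‖ ^ 2 := real_inner_self_eq_norm_sq u
  set F := ⟪p - a₁, u⟫ with hF
  set r := F / ‖u‖ ^ 2 with hr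
  have hrF : r * ‖u‖ ^ 2 = F := by
    rw [hr, div_mul_cancel₀ F (ne_of_gt hn2)]
  set w := p - a₁ - r • u with hw
  have hwu : ⟪w, u⟫ = 0 := by
    rw [hw, inner_sub_left, real_inner_smul_left, huu, hrF, ← hF, sub_self]
  have huw : ⟪u, w⟫ = 0 := by rw [real_inner_comm]; exact hwu
  have hww : ⟪w, w⟫ = ‖w‖ ^ 2 := real_inner_self_eq_norm_sq w
  have hpw : p - a₁ = w + r • u := by rw [hw]; abel
  have hw0 : w = 0 := by
    by_contra hwne
    have hwpos : (0:ℝ) < ‖w‖ ^ 2 := by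
      have := norm_pos_iff.mpr hwne
      positivity
    rcases lt_trichotomy F (‖u‖ ^ 2 / 2) with hc | hc | hc
    · -- F < ‖u‖²/2
      set t := ‖w‖ ^ 2 / (‖u‖ ^ 2 / 2 - F) with ht
      have htpos : 0 < t := div_pos hwpos (by linarith)
      set v := w + t • u with hvdef
      have huv : ⟪u, v⟫ = t * ‖u‖ ^ 2 := by
        rw [hvdef, inner_add_right, real_inner_smul_right, huu, huw]
        ring
      have hpv : ⟪p - a₁, v⟫ = ‖w‖ ^ 2 + t * F := by
        rw [hpw, hvdef]
        simp only [inner_add_left, inner_add_right, real_inner_smul_left,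
          real_inner_smul_right, hwu, huw, huu, hww, mul_zero, zero_mul,
          add_zero, zero_add]
        rw [hrF]
      have h' : t * (‖u‖ ^ 2 / 2 - F) = ‖w‖ ^ 2 := by
        rw [ht, div_mul_cancel₀ _ (ne_of_gt (by linarith : (0:ℝ) < ‖u‖ ^ 2 / 2 - F))]
      have hval : ⟪p - a₁, v⟫ = t * (‖u‖ ^ 2 / 2) := by
        rw [hpv]; linear_combination -h'
      exact slab_empty h₁ h₂ v
        (by rw [← hu, huv]; exact mul_pos htpos hn2) hp
        (by rw [hval]; exact mul_pos htpos (by positivity))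
        (by rw [hval, ← hu, huv]; linarith [mul_pos htpos hn2])
    · -- F = ‖u‖²/2
      exact slab_empty h₁ h₂ u (by rw [← hu, huu]; exact hn2) hp
        (by rw [← hF, hc]; positivity)
        (by rw [← hF, hc, ← hu, huu]; linarith)
    · -- F > ‖u‖²/2
      set t := ‖w‖ ^ 2 / (‖u‖ ^ 2 / 2 - F) with ht
      have htneg : t < 0 := div_neg_of_pos_of_neg hwpos (by linarith)
      set v := -(w + t • u) with hvdef
      have huv : ⟪u, v⟫ = -(t * ‖u‖ ^ 2) := by
        rw [hvdef, inner_neg_right, inner_add_right, real_inner_smul_right, huu, huw]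
        ring
      have hpv : ⟪p - a₁, v⟫ = -(‖w‖ ^ 2 + t * F) := by
        rw [hpw, hvdef, inner_neg_right]
        simp only [inner_add_left, inner_add_right, real_inner_smul_left,
          real_inner_smul_right, hwu, huw, huu, hww, mul_zero, zero_mul,
          add_zero, zero_add]
        rw [hrF]
      have h' : t * (‖u‖ ^ 2 / 2 - F) = ‖w‖ ^ 2 := by
        rw [ht, div_mul_cancel₀ _ (ne_of_lt (by linarith : ‖u‖ ^ 2 / 2 - F < 0))]
      have hval : ⟪p - a₁, v⟫ = -(t * (‖u‖ ^ 2 / 2)) := by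
        rw [hpv]; linear_combination h'
      exact slab_empty h₁ h₂ v
        (by rw [← hu, huv]; exact neg_pos.2 (mul_neg_of_neg_of_pos htneg hn2)) hp
        (by rw [hval]; exact neg_pos.2 (mul_neg_of_neg_of_pos htneg (by positivity)))
        (by rw [hval, ← hu, huv]; linarith [mul_neg_of_neg_of_pos htneg hn2])
  refine ⟨r, ?_⟩
  have hfin : p - a₁ = r • u := by rw [hpw, hw0]; abel
  rw [vadd_eq_add, ← hfin]
  abel
end

section
/- If |S| is even, then for every a ∈ ℝ^d there exists b ∈ ℝ^d with b ≠ a such that 2·V_B(a,b) ≥ |S|; that is, even when forbidden from choosing b = a, Bob can always claim at least half of the voters. -/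
open scoped RealInnerProductSpace

/-- Bob can claim every voter strictly on the `u` side of `a`. -/
lemma key {d : ℕ} (S : Finset (EuclideanSpace ℝ (Fin d)))
    (a u : EuclideanSpace ℝ (Fin d)) (hu : u ≠ 0) :
    ∃ b : EuclideanSpace ℝ (Fin d), b ≠ a ∧
      (S.filter fun x => 0 < ⟪x - a, u⟫).card ≤ claims S b a := by
  set P := S.filter fun x => 0 < ⟪x - a, u⟫ with hP
  have hun : (0:ℝ) < ‖u‖ ^ 2 := pow_pos (norm_pos_iff.mpr hu) 2
  -- choose t > 0 with t * ‖u‖^2 ≤ ⟪x - a, u⟫ for all x ∈ P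
  obtain ⟨t, ht, htle⟩ : ∃ t : ℝ, 0 < t ∧ ∀ x ∈ P, t * ‖u‖ ^ 2 ≤ ⟪x - a, u⟫ := by
    rcases P.eq_empty_or_nonempty with h | h
    · exact ⟨1, one_pos, by simp [h]⟩
    · obtain ⟨x₀, hx₀, hmin⟩ := P.exists_min_image (fun x => ⟪x - a, u⟫) h
      have h0 : 0 < ⟪x₀ - a, u⟫ := (Finset.mem_filter.mp hx₀).2
      exact ⟨⟪x₀ - a, u⟫ / ‖u‖ ^ 2, by positivity,
        fun x hx => by rw [div_mul_cancel₀ _ hun.ne']; exact hmin x hx⟩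
  refine ⟨a + t • u, ?_, ?_⟩
  · simp only [ne_eq, add_eq_left, smul_eq_zero, not_or]
    exact ⟨ht.ne', hu⟩
  · apply Finset.card_le_card
    intro x hx
    have hxS := (Finset.mem_filter.mp hx).1
    have hxi := (Finset.mem_filter.mp hx).2
    have hle := htle x hx
    refine Finset.mem_filter.mpr ⟨hxS, ?_⟩
    have hsq : ‖a + t • u - x‖ ^ 2 < ‖a - x‖ ^ 2 := by
      have : a + t • u - x = (a - x) + t • u := by abel
      rw [this, norm_add_sq_real]
      have hinner : ⟪a - x, t • u⟫ = - (t * ⟪x - a, u⟫) := by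
        rw [real_inner_smul_right]
        have : ⟪a - x, u⟫ = - ⟪x - a, u⟫ := by
          rw [← inner_neg_left, neg_sub]
        rw [this]; ring
      rw [hinner, norm_smul]
      have h2 : t * ‖u‖ ^ 2 < 2 * ⟪x - a, u⟫ := lt_of_le_of_lt hle (by linarith)
      have heq : (‖t‖ * ‖u‖) ^ 2 = t * (t * ‖u‖^2) := by
        rw [mul_pow, Real.norm_eq_abs, sq_abs]; ring
      nlinarith [heq, h2, ht]
    rw [dist_eq_norm, dist_eq_norm]
    exact lt_of_pow_lt_pow_left₀ 2 (norm_nonneg _) hsq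

/-- if `|S|` is even then for every `a` Bob has a reply `b ≠ a`
claiming at least half the voters: `2 * V_B(a,b) ≥ |S|`. -/
theorem stmt2 (d : ℕ) (hd : 1 ≤ d) (S : Finset (EuclideanSpace ℝ (Fin d)))
    (heven : Even S.card) :
    ∀ a : EuclideanSpace ℝ (Fin d), ∃ b : EuclideanSpace ℝ (Fin d),
      b ≠ a ∧ S.card ≤ 2 * claims S b a := by
  intro a
  haveI : Nonempty (Fin d) := ⟨⟨0, hd⟩⟩
  haveI : Nontrivial (EuclideanSpace ℝ (Fin d)) := by infer_instance
  -- find a generic direction u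
  classical
  set s : Finset (Subspace ℝ (EuclideanSpace ℝ (Fin d))) :=
    insert ⊥ ((S.erase a).image fun x => LinearMap.ker ((innerSL ℝ (x - a) : EuclideanSpace ℝ (Fin d) →L[ℝ] ℝ) : EuclideanSpace ℝ (Fin d) →ₗ[ℝ] ℝ)) with hs
  have htop : ⊤ ∉ s := by
    simp only [hs, Finset.mem_insert, Finset.mem_image, not_or, not_exists]
    refine ⟨fun h => bot_ne_top h.symm, ?_⟩
    rintro x ⟨hx, hker⟩
    ·
      have hxa : x - a ≠ 0 := sub_ne_zero.mpr (Finset.ne_of_mem_erase hx)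
      have : (x - a) ∈ LinearMap.ker ((innerSL ℝ (x - a) : EuclideanSpace ℝ (Fin d) →L[ℝ] ℝ) : EuclideanSpace ℝ (Fin d) →ₗ[ℝ] ℝ) := hker ▸ Submodule.mem_top
      simp only [LinearMap.mem_ker, ContinuousLinearMap.coe_coe, innerSL_apply_apply] at this
      exact hxa (inner_self_eq_zero.mp this)
  have hne := Subspace.biUnion_ne_univ_of_top_notMem htop
  obtain ⟨u, hu⟩ : ∃ u : EuclideanSpace ℝ (Fin d), ∀ p ∈ s, u ∉ p := by
    rcases Set.ne_univ_iff_exists_notMem _ |>.mp hne with ⟨u, hu⟩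
    exact ⟨u, fun p hp hmem => hu (Set.mem_biUnion hp hmem)⟩
  have hu0 : u ≠ 0 := fun h => hu ⊥ (Finset.mem_insert_self _ _) (by simp [h])
  have hgen : ∀ x ∈ S, x ≠ a → ⟪x - a, u⟫ ≠ 0 := by
    intro x hx hxa h
    exact hu _ (Finset.mem_insert_of_mem (Finset.mem_image_of_mem _
      (Finset.mem_erase.mpr ⟨hxa, hx⟩)))
      (LinearMap.mem_ker.mpr h)
  set P := S.filter fun x => 0 < ⟪x - a, u⟫ with hPdef
  set N := S.filter fun x => 0 < ⟪x - a, -u⟫ with hNdef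
  have hcard : S.card ≤ P.card + N.card + 1 := by
    have hsub : S ⊆ (P ∪ N) ∪ {a} := by
      intro x hx
      rcases eq_or_ne x a with h | h
      · simp [h]
      · rcases lt_trichotomy (⟪x - a, u⟫ : ℝ) 0 with hlt | heq | hgt
        · exact Finset.mem_union_left _ (Finset.mem_union_right _
            (Finset.mem_filter.mpr ⟨hx, by rw [inner_neg_right]; linarith⟩))
        · exact absurd heq (hgen x hx h)
        · exact Finset.mem_union_left _ (Finset.mem_union_left _
            (Finset.mem_filter.mpr ⟨hx, hgt⟩))
    calc S.card ≤ ((P ∪ N) ∪ {a}).card := Finset.card_le_card hsub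
      _ ≤ (P ∪ N).card + 1 := by
          simpa using Finset.card_union_le (P ∪ N) {a}
      _ ≤ P.card + N.card + 1 := by
          simpa using Nat.add_le_add_right (Finset.card_union_le P N) 1
  obtain ⟨k, hk⟩ := heven
  rcases le_total N.card P.card with hle | hle
  · obtain ⟨b, hb, hcl⟩ := key S a u hu0
    rw [← hPdef] at hcl
    exact ⟨b, hb, by omega⟩
  · obtain ⟨b, hb, hcl⟩ := key S a (-u) (neg_ne_zero.mpr hu0)
    rw [← hNdef] at hcl
    exact ⟨b, hb, by omega⟩
end

section
/- Let d ≥ 2 and suppose |S| is odd. If a ∈ ℝ^d is a winning point for Alice, then a ∈ S. -/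
open scoped RealInnerProductSpace

open MeasureTheory in
private lemma exists_generic_dir (d : ℕ) (T : Finset (EuclideanSpace ℝ (Fin d)))
    (hT : ∀ v ∈ T, v ≠ 0) :
    ∃ u : EuclideanSpace ℝ (Fin d), ∀ v ∈ T, ⟪u, v⟫ ≠ 0 := by
  by_contra h
  push_neg at h
  have hcover : (Set.univ : Set (EuclideanSpace ℝ (Fin d))) ⊆
      ⋃ v ∈ T, (LinearMap.ker ((innerSL ℝ v : EuclideanSpace ℝ (Fin d) →L[ℝ] ℝ) : EuclideanSpace ℝ (Fin d) →ₗ[ℝ] ℝ) : Set (EuclideanSpace ℝ (Fin d))) := by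
    intro u _
    obtain ⟨v, hv, hinner⟩ := h u
    exact Set.mem_biUnion hv (by simpa [LinearMap.mem_ker, mul_comm, real_inner_comm] using hinner)
  have h0 : volume (⋃ v ∈ (T : Set (EuclideanSpace ℝ (Fin d))),
      (LinearMap.ker ((innerSL ℝ v : EuclideanSpace ℝ (Fin d) →L[ℝ] ℝ) : EuclideanSpace ℝ (Fin d) →ₗ[ℝ] ℝ) : Set (EuclideanSpace ℝ (Fin d)))) = 0 := by
    refine (measure_biUnion_null_iff T.countable_toSet).mpr ?_
    intro v hv
    refine Measure.addHaar_submodule _ _ ?_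
    intro htop
    refine hT v hv ?_
    have hv2 : (v : EuclideanSpace ℝ (Fin d)) ∈ LinearMap.ker ((innerSL ℝ v : EuclideanSpace ℝ (Fin d) →L[ℝ] ℝ) : EuclideanSpace ℝ (Fin d) →ₗ[ℝ] ℝ) := htop ▸ trivial
    have : ⟪v, v⟫ = 0 := hv2
    exact inner_self_eq_zero.mp this
  have := measure_mono_null hcover h0
  exact (isOpen_univ.measure_ne_zero volume Set.univ_nonempty) this

private lemma claims_perturb {d : ℕ} (S : Finset (EuclideanSpace ℝ (Fin d)))
    (a u : EuclideanSpace ℝ (Fin d)) (hu : u ≠ 0) (ε : ℝ) (hε : 0 < ε)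
    (h : ∀ x ∈ S, ε * ‖u‖ ^ 2 < 2 * |⟪u, x - a⟫|) :
    claims S (a + ε • u) a = (S.filter fun x => 0 < ⟪u, x - a⟫).card ∧
    claims S a (a + ε • u) = (S.filter fun x => ⟪u, x - a⟫ < 0).card := by
  have hun : 0 < ‖u‖ := norm_pos_iff.mpr hu
  have key : ∀ x : EuclideanSpace ℝ (Fin d),
      ‖a + ε • u - x‖ ^ 2 = ‖a - x‖ ^ 2 - 2 * (ε * ⟪u, x - a⟫) + ε ^ 2 * ‖u‖ ^ 2 := by
    intro x
    have : a + ε • u - x = (a - x) + ε • u := by abel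
    rw [this, norm_add_sq_real, real_inner_smul_right, norm_smul]
    have : ⟪a - x, u⟫ = -⟪u, x - a⟫ := by
      rw [real_inner_comm, ← inner_neg_right]; congr 1; abel
    rw [this]
    simp [mul_pow, sq_abs]
    ring
  constructor <;> (unfold claims; congr 1; apply Finset.filter_congr; intro x hx)
  · have hb := h x hx
    rw [dist_eq_norm, dist_eq_norm]
    constructor
    · intro hlt
      have h2 : ‖a + ε • u - x‖ ^ 2 < ‖a - x‖ ^ 2 := by
        apply pow_lt_pow_left₀ hlt (norm_nonneg _)
        · exact two_ne_zero
      rw [key x] at h2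
      rcases abs_cases ⟪u, x - a⟫ with ⟨he, _⟩ | ⟨he, _⟩ <;> nlinarith
    · intro hc
      have habs : |⟪u, x - a⟫| = ⟪u, x - a⟫ := abs_of_pos hc
      rw [habs] at hb
      have h2 : ‖a + ε • u - x‖ ^ 2 < ‖a - x‖ ^ 2 := by rw [key x]; nlinarith
      exact lt_of_pow_lt_pow_left₀ 2 (norm_nonneg _) h2
  · have hb := h x hx
    rw [dist_eq_norm, dist_eq_norm]
    constructor
    · intro hlt
      have h2 : ‖a - x‖ ^ 2 < ‖a + ε • u - x‖ ^ 2 := by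
        apply pow_lt_pow_left₀ hlt (norm_nonneg _); exact two_ne_zero
      rw [key x] at h2
      rcases abs_cases ⟪u, x - a⟫ with ⟨he, _⟩ | ⟨he, _⟩ <;> nlinarith
    · intro hc
      have habs : |⟪u, x - a⟫| = -⟪u, x - a⟫ := abs_of_neg hc
      rw [habs] at hb
      have h2 : ‖a - x‖ ^ 2 < ‖a + ε • u - x‖ ^ 2 := by rw [key x]; nlinarith
      exact lt_of_pow_lt_pow_left₀ 2 (norm_nonneg _) h2

/-- if `d ≥ 2` and `|S|` is odd, then any winning point of Alice belongs to `S`. -/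
theorem stmt3 (d : ℕ) (hd : 2 ≤ d) (S : Finset (EuclideanSpace ℝ (Fin d)))
    (hodd : Odd S.card) (a : EuclideanSpace ℝ (Fin d))
    (ha : IsWinningPoint S a) :
    a ∈ S := by
  classical
  by_contra haS
  -- S is nonempty since its cardinality is odd
  have hne : S.Nonempty := by
    rcases S.eq_empty_or_nonempty with rfl | h
    · simp at hodd
    · exact h
  -- choose a generic direction u
  obtain ⟨u, hu⟩ := exists_generic_dir d (S.image (fun x => x - a)) (by
    intro v hv
    obtain ⟨x, hx, rfl⟩ := Finset.mem_image.mp hv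
    intro h0
    exact haS (by simpa [sub_eq_zero.mp h0] using hx))
  have hu' : ∀ x ∈ S, ⟪u, x - a⟫ ≠ 0 := fun x hx =>
    hu _ (Finset.mem_image_of_mem _ hx)
  have hu0 : u ≠ 0 := by
    rintro rfl
    obtain ⟨x, hx⟩ := hne
    exact hu' x hx (by simp)
  have hun : 0 < ‖u‖ := norm_pos_iff.mpr hu0
  -- choose a small ε
  set m := S.inf' hne fun x => 2 * |⟪u, x - a⟫| with hm
  have hmpos : 0 < m := by
    rw [hm]
    apply Finset.lt_inf'_iff _ |>.mpr
    intro x hx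
    have := hu' x hx
    positivity
  set ε := m / (2 * ‖u‖ ^ 2) with hε
  have hεpos : 0 < ε := by positivity
  have hεsmall : ∀ x ∈ S, ε * ‖u‖ ^ 2 < 2 * |⟪u, x - a⟫| := by
    intro x hx
    have h1 : ε * ‖u‖ ^ 2 = m / 2 := by
      rw [hε]; field_simp
    rw [h1]
    have h2 : m ≤ 2 * |⟪u, x - a⟫| := Finset.inf'_le _ hx
    linarith
  -- apply the perturbation lemma in directions u and -u
  obtain ⟨hP, hN⟩ := claims_perturb S a u hu0 ε hεpos hεsmall
  have hεsmall' : ∀ x ∈ S, ε * ‖-u‖ ^ 2 < 2 * |⟪-u, x - a⟫| := by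
    intro x hx
    simpa [inner_neg_left] using hεsmall x hx
  obtain ⟨hP', hN'⟩ := claims_perturb S a (-u) (by simpa using hu0) ε hεpos hεsmall'
  have e1 : (S.filter fun x => 0 < ⟪-u, x - a⟫) = S.filter fun x => ⟪u, x - a⟫ < 0 := by
    apply Finset.filter_congr; intro x _; simp [inner_neg_left]
  have e2 : (S.filter fun x => ⟪-u, x - a⟫ < 0) = S.filter fun x => 0 < ⟪u, x - a⟫ := by
    apply Finset.filter_congr; intro x _; simp [inner_neg_left]
  rw [e1] at hP'
  rw [e2] at hN'
  -- the two inequalities from the winning-point hypothesis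
  have i1 := ha (a + ε • u)
  have i2 := ha (a + ε • (-u))
  rw [hP, hN] at i1
  rw [hP', hN'] at i2
  have heq : (S.filter fun x => 0 < ⟪u, x - a⟫).card
      = (S.filter fun x => ⟪u, x - a⟫ < 0).card := le_antisymm i1 i2
  -- the two sign classes partition S
  have hsplit : (S.filter fun x => 0 < ⟪u, x - a⟫).card
      + (S.filter fun x => ⟪u, x - a⟫ < 0).card = S.card := by
    rw [show (S.filter fun x => ⟪u, x - a⟫ < 0)
        = S.filter fun x => ¬ 0 < ⟪u, x - a⟫ from ?_]
    · exact Finset.card_filter_add_card_filter_not _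
    · apply Finset.filter_congr
      intro x hx
      simp only [not_lt, eq_iff_iff]
      exact ⟨fun h => h.le, fun h => lt_of_le_of_ne h (hu' x hx)⟩
  have : Even S.card := ⟨_, by rw [← hsplit, heq]⟩
  exact (Nat.not_even_iff_odd.mpr hodd) this
end

section
/- Let d ≥ 2 and suppose |S| is odd. Then Alice wins if and only if there exists a point x ∈ S such that every perfect hyperplane contains x; moreover, any such x is a winning point for Alice. -/
open scoped RealInnerProductSpace

/-- A hyperplane `{y | ⟪y,c⟫ = lam}` is perfect (odd case): good, and containing exactly
one point of `S`. -/
noncomputable def IsPerfectOdd {d : ℕ} (S : Finset (EuclideanSpace ℝ (Fin d)))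
    (c : EuclideanSpace ℝ (Fin d)) (lam : ℝ) : Prop :=
  (S.filter fun y => lam < ⟪y, c⟫).card = (S.filter fun y => ⟪y, c⟫ < lam).card ∧
  (S.filter fun y => ⟪y, c⟫ = lam).card = 1

section Aux
open Finset

variable {d : ℕ}

lemma tri_card (S : Finset (EuclideanSpace ℝ (Fin d))) (g : EuclideanSpace ℝ (Fin d) → ℝ) (t : ℝ) :
    (S.filter fun y => g y < t).card + (S.filter fun y => g y = t).card
      + (S.filter fun y => t < g y).card = S.card := by
  classical
  have h1 := Finset.card_filter_add_card_filter_not (s := S) (p := fun y => g y < t)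
  have h2 : S.filter (fun y => ¬ g y < t)
      = (S.filter fun y => g y = t) ∪ (S.filter fun y => t < g y) := by
    ext z
    simp only [Finset.mem_filter, Finset.mem_union, not_lt]
    constructor
    · rintro ⟨hz, hle⟩
      rcases eq_or_lt_of_le hle with h | h
      · exact Or.inl ⟨hz, h.symm⟩
      · exact Or.inr ⟨hz, h⟩
    · rintro (⟨hz, h⟩ | ⟨hz, h⟩)
      · exact ⟨hz, le_of_eq h.symm⟩
      · exact ⟨hz, h.le⟩
  have hdisj : Disjoint (S.filter fun y => g y = t) (S.filter fun y => t < g y) := by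
    apply Finset.disjoint_filter_filter'
    exact Set.disjoint_left.mpr fun y (hy : g y = t) (hy' : t < g y) => absurd hy (ne_of_gt hy')
  have h3 := Finset.card_union_of_disjoint hdisj
  rw [h2, h3] at h1
  omega

lemma bisect (a b y : EuclideanSpace ℝ (Fin d)) :
    dist b y < dist a y ↔ (‖b‖^2 - ‖a‖^2)/2 < ⟪y, b - a⟫ := by
  have hsq : dist b y < dist a y ↔ dist b y ^ 2 < dist a y ^ 2 := by
    constructor
    · intro h
      exact pow_lt_pow_left₀ h dist_nonneg (by norm_num)
    · intro h
      by_contra hle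
      push_neg at hle
      exact absurd (pow_le_pow_left₀ dist_nonneg hle 2) (not_le.mpr h)
  rw [hsq, dist_eq_norm, dist_eq_norm]
  rw [@norm_sub_sq_real, @norm_sub_sq_real]
  rw [inner_sub_right]
  have h1 : ⟪y, b⟫ = ⟪b, y⟫ := real_inner_comm _ _
  have h2 : ⟪y, a⟫ = ⟪a, y⟫ := real_inner_comm _ _
  rw [h1, h2]
  constructor <;> intro h <;> linarith

lemma cover (P : Finset (EuclideanSpace ℝ (Fin d))) (hP : ∀ v ∈ P, v ≠ 0) :
    ∃ u, ∀ v ∈ P, ⟪v, u⟫ ≠ 0 := by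
  classical
  induction P using Finset.induction_on with
  | empty => exact ⟨0, by simp⟩
  | @insert v P hvP ih =>
    obtain ⟨u, hu⟩ := ih (fun p hp => hP p (Finset.mem_insert_of_mem hp))
    have hv : v ≠ 0 := hP v (Finset.mem_insert_self v P)
    set bad : Finset ℝ := (insert v P).image (fun p => -⟪p, u⟫ / ⟪p, v⟫) with hbad
    obtain ⟨t, ht⟩ := Infinite.exists_notMem_finset bad
    refine ⟨u + t • v, ?_⟩
    intro p hp hzero
    rw [inner_add_right, real_inner_smul_right] at hzero
    have hpv : ⟪p, v⟫ ≠ 0 := by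
      rcases Finset.mem_insert.mp hp with rfl | hpP
      · exact inner_self_ne_zero.mpr hv
      · intro h
        rw [h, mul_zero, add_zero] at hzero
        exact hu p hpP hzero
    have : t = -⟪p, u⟫ / ⟪p, v⟫ := by
      rw [eq_div_iff hpv]
      linarith
    exact ht (by
      rw [this]
      exact Finset.mem_image_of_mem _ hp)

lemma exists_sep (S : Finset (EuclideanSpace ℝ (Fin d))) :
    ∃ u, ∀ y ∈ S, ∀ z ∈ S, y ≠ z → ⟪y, u⟫ ≠ ⟪z, u⟫ := by
  classical
  obtain ⟨u, hu⟩ := cover (((S ×ˢ S).filter fun p => p.1 ≠ p.2).image fun p => p.1 - p.2)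
    (by
      intro w hw
      simp only [Finset.mem_image, Finset.mem_filter, Finset.mem_product] at hw
      obtain ⟨p, ⟨⟨_, _⟩, hne⟩, rfl⟩ := hw
      exact sub_ne_zero_of_ne hne)
  refine ⟨u, fun y hy z hz hne heq => ?_⟩
  have hmem : y - z ∈ ((S ×ˢ S).filter fun p => p.1 ≠ p.2).image fun p => p.1 - p.2 := by
    refine Finset.mem_image_of_mem _ ?_ (a := (y, z))
    simp [Finset.mem_filter, Finset.mem_product, hy, hz, hne]
  have := hu _ hmem
  rw [inner_sub_left, heq, sub_self] at this
  exact this rfl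

lemma exists_median (S : Finset (EuclideanSpace ℝ (Fin d))) (F : EuclideanSpace ℝ (Fin d) → ℝ)
    (hinj : ∀ y ∈ S, ∀ z ∈ S, y ≠ z → F y ≠ F z) (m : ℕ) (hcard : S.card = 2 * m + 1) :
    ∃ y₀ ∈ S, (S.filter fun z => F z < F y₀).card = m ∧
      (S.filter fun z => F y₀ < F z).card = m ∧
      (S.filter fun z => F z = F y₀).card = 1 := by
  classical
  have hS : S.Nonempty := Finset.card_pos.mp (by omega)
  have heqcard : ∀ y ∈ S, (S.filter fun z => F z = F y).card = 1 := by
    intro y hy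
    have : S.filter (fun z => F z = F y) = {y} := by
      ext z
      simp only [Finset.mem_filter, Finset.mem_singleton]
      constructor
      · rintro ⟨hz, hFz⟩
        by_contra hne
        exact hinj z hz y hy hne hFz
      · rintro rfl; exact ⟨hy, rfl⟩
    rw [this, Finset.card_singleton]
  set W := S.filter (fun y => (S.filter fun z => F z < F y).card ≤ m) with hW
  have hWne : W.Nonempty := by
    obtain ⟨y0, hy0, hmin⟩ := S.exists_min_image F hS
    refine ⟨y0, Finset.mem_filter.mpr ⟨hy0, ?_⟩⟩
    have : S.filter (fun z => F z < F y0) = ∅ := by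
      apply Finset.filter_eq_empty_iff.mpr
      intro z hz
      exact not_lt.mpr (hmin z hz)
    simp [this]
  obtain ⟨y₀, hy₀W, hmax⟩ := W.exists_max_image F hWne
  obtain ⟨hy₀S, hcl⟩ := Finset.mem_filter.mp hy₀W
  have htri := tri_card S F (F y₀)
  rw [heqcard y₀ hy₀S] at htri
  have hcg : (S.filter fun z => F y₀ < F z).card ≤ m := by
    by_contra hgt
    push_neg at hgt
    have hne2 : (S.filter fun z => F y₀ < F z).Nonempty := Finset.card_pos.mp (by omega)
    obtain ⟨y', hy', hmin'⟩ := (S.filter fun z => F y₀ < F z).exists_min_image F hne2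
    obtain ⟨hy'S, hy'gt⟩ := Finset.mem_filter.mp hy'
    have hsub : (S.filter fun z => F z < F y') ⊆ S.filter (fun z => F z < F y₀ ∨ F z = F y₀) := by
      intro z hz
      obtain ⟨hzS, hzlt⟩ := Finset.mem_filter.mp hz
      refine Finset.mem_filter.mpr ⟨hzS, ?_⟩
      rcases lt_trichotomy (F z) (F y₀) with h | h | h
      · exact Or.inl h
      · exact Or.inr h
      · exact absurd hzlt (not_lt.mpr (hmin' z (Finset.mem_filter.mpr ⟨hzS, h⟩)))
    have hcards : (S.filter (fun z => F z < F y₀ ∨ F z = F y₀)).card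
        = (S.filter fun z => F z < F y₀).card + (S.filter fun z => F z = F y₀).card := by
      rw [← Finset.card_union_of_disjoint]
      · congr 1
        ext z
        simp only [Finset.mem_filter, Finset.mem_union]
        tauto
      · apply Finset.disjoint_filter_filter'
        exact Set.disjoint_left.mpr fun z hz hz' => absurd hz' (ne_of_lt hz)
    have h1 : (S.filter fun z => F z < F y').card ≤ m := by
      have := Finset.card_le_card hsub
      rw [hcards, heqcard y₀ hy₀S] at this
      omega
    have : y' ∈ W := Finset.mem_filter.mpr ⟨hy'S, h1⟩
    exact absurd (hmax y' this) (not_le.mpr hy'gt)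
  exact ⟨y₀, hy₀S, by omega, by omega, heqcard y₀ hy₀S⟩

lemma exists_perfect (S : Finset (EuclideanSpace ℝ (Fin d))) (m : ℕ)
    (hcard : S.card = 2 * m + 1) (x : EuclideanSpace ℝ (Fin d))
    (c : EuclideanSpace ℝ (Fin d)) (hc : c ≠ 0) (lam : ℝ) (hx : ⟪x, c⟫ < lam)
    (hcnt : (S.filter fun y => ⟪y, c⟫ < lam).card < (S.filter fun y => lam < ⟪y, c⟫).card) :
    ∃ c' lam', c' ≠ 0 ∧ IsPerfectOdd S c' lam' ∧ ⟪x, c'⟫ < lam' := by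
  classical
  obtain ⟨u, hu⟩ := exists_sep S
  set f : EuclideanSpace ℝ (Fin d) → ℝ := fun y => ⟪y, c⟫ with hf
  set g : EuclideanSpace ℝ (Fin d) → ℝ := fun y => ⟪y, u⟫ with hg
  have hxS : (insert x S).Nonempty := Finset.insert_nonempty _ _
  set K : ℝ := (insert x S).sup' hxS (fun y => |g y|) with hK
  have hK0 : 0 ≤ K :=
    le_trans (abs_nonneg (g x))
      (Finset.le_sup' (fun y => |g y|) (Finset.mem_insert_self x S))
  have hKb : ∀ y ∈ insert x S, ∀ z ∈ insert x S, g z - g y ≤ 2 * K := by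
    intro y hy z hz
    have h1 : |g y| ≤ K := Finset.le_sup' (fun w => |g w|) hy
    have h2 : |g z| ≤ K := Finset.le_sup' (fun w => |g w|) hz
    have := abs_le.mp h1
    have := abs_le.mp h2
    linarith [abs_le.mp h1, abs_le.mp h2]
  -- minimal positive gap of f on S
  set D : Finset ℝ := ((S ×ˢ S).filter fun p => f p.1 < f p.2).image (fun p => f p.2 - f p.1)
    with hD
  set δ₁ : ℝ := if h : D.Nonempty then D.min' h else 1 with hδ₁
  have hδ₁pos : 0 < δ₁ := by
    rw [hδ₁]
    split_ifs with h
    · obtain ⟨p, hp, hpe⟩ := Finset.mem_image.mp (D.min'_mem h)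
      obtain ⟨-, hlt⟩ := Finset.mem_filter.mp hp
      rw [← hpe]; linarith
    · norm_num
  have hδ₁le : ∀ y ∈ S, ∀ z ∈ S, f y < f z → δ₁ ≤ f z - f y := by
    intro y hy z hz hlt
    have hmem : f z - f y ∈ D := by
      refine Finset.mem_image_of_mem _ ?_ (a := (y, z))
      exact Finset.mem_filter.mpr ⟨Finset.mem_product.mpr ⟨hy, hz⟩, hlt⟩
    rw [hδ₁]
    rw [dif_pos ⟨_, hmem⟩]
    exact Finset.min'_le _ _ hmem
  set δ₃ : ℝ := lam - f x with hδ₃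
  have hδ₃pos : 0 < δ₃ := by simp [hδ₃]; linarith
  set ε : ℝ := min (min δ₁ δ₃ / (2 * K + 1)) (‖c‖ / (‖u‖ + 1)) with hε
  have hεpos : 0 < ε := by
    apply lt_min
    · apply div_pos (lt_min hδ₁pos hδ₃pos); linarith
    · apply div_pos (norm_pos_iff.mpr hc); positivity
  have hεK1 : ε * (2 * K + 1) ≤ min δ₁ δ₃ := by
    rw [← le_div_iff₀ (by linarith : (0:ℝ) < 2 * K + 1)]
    exact min_le_left _ _
  have hε2K : ε * (2 * K) < min δ₁ δ₃ := lt_of_lt_of_le (by nlinarith) hεK1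
  set c' : EuclideanSpace ℝ (Fin d) := c + ε • u with hc'
  have hc'0 : c' ≠ 0 := by
    intro h0
    rw [hc'] at h0
    have hceq : c = -(ε • u) := eq_neg_of_add_eq_zero_left h0
    have hn : ‖c‖ = ε * ‖u‖ := by
      rw [hceq, norm_neg, norm_smul, Real.norm_eq_abs, abs_of_pos hεpos]
    have hεle : ε ≤ ‖c‖ / (‖u‖ + 1) := min_le_right _ _
    have hcpos : (0:ℝ) < ‖c‖ := norm_pos_iff.mpr hc
    have hlt : ε * ‖u‖ < ‖c‖ := by
      calc ε * ‖u‖ ≤ (‖c‖ / (‖u‖ + 1)) * ‖u‖ :=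
            mul_le_mul_of_nonneg_right hεle (norm_nonneg _)
        _ < ‖c‖ := by
            rw [div_mul_eq_mul_div, div_lt_iff₀ (by positivity)]
            nlinarith [norm_nonneg u]
    linarith [hn]
  set F : EuclideanSpace ℝ (Fin d) → ℝ := fun y => ⟪y, c'⟫ with hF
  have hFeq : ∀ y, F y = f y + ε * g y := by
    intro y
    rw [hF, hc']
    simp only [inner_add_right, real_inner_smul_right]
    rfl
  -- injectivity of F on S
  have hinj : ∀ y ∈ S, ∀ z ∈ S, y ≠ z → F y ≠ F z := by
    intro y hy z hz hne heq
    rw [hFeq, hFeq] at heq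
    rcases lt_trichotomy (f y) (f z) with h | h | h
    · have h1 := hδ₁le y hy z hz h
      have h2 := hKb z (Finset.mem_insert_of_mem hz) y (Finset.mem_insert_of_mem hy)
      have : δ₁ ≤ min δ₁ δ₃ := by nlinarith [min_le_left δ₁ δ₃]
      nlinarith [min_le_left δ₁ δ₃]
    · have : g y ≠ g z := hu y hy z hz hne
      have : g y = g z := by
        have := heq
        nlinarith [hεpos]
      tauto
    · have h1 := hδ₁le z hz y hy h
      have h2 := hKb y (Finset.mem_insert_of_mem hy) z (Finset.mem_insert_of_mem hz)
      nlinarith [min_le_left δ₁ δ₃]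
  -- points with f ≥ lam are F-above x
  have hfact2 : ∀ y ∈ S, lam ≤ f y → F x < F y := by
    intro y hy hge
    rw [hFeq, hFeq]
    have h2 := hKb y (Finset.mem_insert_of_mem hy) x (Finset.mem_insert_self x S)
    have h3 : δ₃ ≤ f y - f x := by rw [hδ₃]; linarith
    nlinarith [min_le_right δ₁ δ₃]
  -- count of points with f ≥ lam
  have hbelow : (S.filter fun y => f y < lam).card ≤ m := by
    have htri := tri_card S f lam
    have he1 : (S.filter fun y => f y < lam) = (S.filter fun y => ⟪y, c⟫ < lam) := rfl
    have he2 : (S.filter fun y => lam < f y) = (S.filter fun y => lam < ⟪y, c⟫) := rfl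
    rw [he1, he2] at htri
    rw [he1]
    omega
  have hgecard : m + 1 ≤ (S.filter fun y => lam ≤ f y).card := by
    have h1 := Finset.card_filter_add_card_filter_not (s := S) (p := fun y => f y < lam)
    have h2 : (S.filter fun y => ¬ f y < lam) = S.filter fun y => lam ≤ f y := by
      apply Finset.filter_congr; intro y _; simp [not_lt]
    rw [h2] at h1
    omega
  obtain ⟨y₀, hy₀S, hmlt, hmgt, hmeq⟩ := exists_median S F hinj m hcard
  have hFx : F x < F y₀ := by
    by_contra hle
    push_neg at hle
    have hsub : (S.filter fun y => lam ≤ f y) ⊆ S.filter fun z => F y₀ < F z := by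
      intro y hy
      obtain ⟨hyS, hyge⟩ := Finset.mem_filter.mp hy
      exact Finset.mem_filter.mpr ⟨hyS, lt_of_le_of_lt hle (hfact2 y hyS hyge)⟩
    have := Finset.card_le_card hsub
    omega
  refine ⟨c', F y₀, hc'0, ⟨?_, ?_⟩, hFx⟩
  · rw [hmlt] at *; rw [hmgt]
  · exact hmeq

lemma winning_of (S : Finset (EuclideanSpace ℝ (Fin d))) (x : EuclideanSpace ℝ (Fin d))
    (h : ∀ (c : EuclideanSpace ℝ (Fin d)) (lam : ℝ), c ≠ 0 → ⟪x, c⟫ < lam →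
      (S.filter fun y => lam < ⟪y, c⟫).card ≤ (S.filter fun y => ⟪y, c⟫ < lam).card) :
    IsWinningPoint S x := by
  classical
  intro b
  by_cases hbx : b = x
  · subst hbx; exact le_refl _
  · have hc0 : b - x ≠ 0 := sub_ne_zero_of_ne hbx
    set c : EuclideanSpace ℝ (Fin d) := b - x with hc
    set lam : ℝ := (‖b‖^2 - ‖x‖^2)/2 with hlam
    have hxlam : ⟪x, c⟫ < lam := by
      rw [hc, hlam, inner_sub_right]
      have hexp : ‖b - x‖^2 = ‖b‖^2 - 2 * ⟪b, x⟫ + ‖x‖^2 := norm_sub_sq_real b x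
      have hpos0 : (0:ℝ) < ‖b - x‖ := norm_pos_iff.mpr (sub_ne_zero_of_ne hbx)
      have hpos : (0:ℝ) < ‖b - x‖^2 := by positivity
      have h1 : ⟪x, b⟫ = ⟪b, x⟫ := real_inner_comm _ _
      have h2 : ⟪x, x⟫ = ‖x‖^2 := real_inner_self_eq_norm_sq x
      rw [h1, h2]
      linarith
    have h1 : claims S b x = (S.filter fun y => lam < ⟪y, c⟫).card := by
      unfold claims
      congr 1
      apply Finset.filter_congr
      intro y _
      rw [bisect x b y]
    have h2 : claims S x b = (S.filter fun y => ⟪y, c⟫ < lam).card := by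
      unfold claims
      congr 1
      apply Finset.filter_congr
      intro y _
      rw [bisect b x y]
      rw [hc, hlam, inner_sub_right, inner_sub_right]
      constructor <;> intro <;> linarith
    rw [h1, h2]
    exact h c lam hc0 hxlam

lemma of_winning (S : Finset (EuclideanSpace ℝ (Fin d))) (a : EuclideanSpace ℝ (Fin d))
    (hw : IsWinningPoint S a) (c : EuclideanSpace ℝ (Fin d)) (hc : c ≠ 0) :
    (S.filter fun y => ⟪a, c⟫ < ⟪y, c⟫).card ≤ (S.filter fun y => ⟪y, c⟫ ≤ ⟪a, c⟫).card := by
  classical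
  set α : ℝ := ⟪a, c⟫ with hα
  by_cases hne : (S.filter fun y => α < ⟪y, c⟫).Nonempty
  case neg =>
    rw [Finset.not_nonempty_iff_eq_empty.mp hne]
    simp
  case pos =>
    set δ : ℝ := ((S.filter fun y => α < ⟪y, c⟫).image fun y => ⟪y, c⟫ - α).min'
      (hne.image _) with hδ
    have hδpos : 0 < δ := by
      have hmem := Finset.min'_mem _ ((hne.image fun y => ⟪y, c⟫ - α))
      rw [← hδ] at hmem
      obtain ⟨y, hy, hye⟩ := Finset.mem_image.mp hmem
      obtain ⟨-, hlt⟩ := Finset.mem_filter.mp hy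
      rw [← hye]; linarith
    have hδle : ∀ y ∈ S, α < ⟪y, c⟫ → δ ≤ ⟪y, c⟫ - α := by
      intro y hy hlt
      exact Finset.min'_le _ _ (Finset.mem_image_of_mem _ (Finset.mem_filter.mpr ⟨hy, hlt⟩))
    have hcpos0 : (0:ℝ) < ‖c‖ := norm_pos_iff.mpr hc
    have hcpos : (0:ℝ) < ‖c‖^2 := by positivity
    set ε : ℝ := δ / ‖c‖^2 with hε
    have hεpos : 0 < ε := div_pos hδpos hcpos
    set b : EuclideanSpace ℝ (Fin d) := a + ε • c with hb
    have hbn : ‖b‖^2 = ‖a‖^2 + 2 * ε * α + ε^2 * ‖c‖^2 := by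
      rw [hb]
      rw [@norm_add_sq_real]
      rw [real_inner_smul_right, norm_smul, Real.norm_eq_abs, abs_of_pos hεpos]
      rw [mul_pow]
      have : ⟪a, c⟫ = α := rfl
      rw [this]
      ring
    have hkey : ε * ‖c‖^2 = δ := by
      rw [hε]; field_simp
    have hhalf : (‖b‖^2 - ‖a‖^2)/2 = ε * α + ε * δ / 2 := by
      rw [hbn]; nlinarith [hkey]
    have hApos := hw b
    have hA : claims S b a = (S.filter fun y => α < ⟪y, c⟫).card := by
      unfold claims
      congr 1
      apply Finset.filter_congr
      intro y _
      rw [bisect a b y]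
      have hsub : b - a = ε • c := by rw [hb]; abel
      rw [hsub, real_inner_smul_right, hhalf]
      constructor
      · intro hlt
        by_contra hle
        push_neg at hle
        nlinarith
      · intro hlt
        have := hδle y ‹y ∈ S› hlt
        nlinarith
    have hB : claims S a b = (S.filter fun y => ⟪y, c⟫ ≤ α).card := by
      unfold claims
      congr 1
      apply Finset.filter_congr
      intro y hy
      rw [bisect b a y]
      have hsub : a - b = -(ε • c) := by rw [hb]; abel
      rw [hsub, inner_neg_right, real_inner_smul_right]
      constructor
      · intro hlt
        by_contra hgt
        push_neg at hgt
        have := hδle y hy hgt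
        nlinarith
      · intro hle
        nlinarith
    rw [hA, hB] at hApos
    exact hApos

end Aux

section Main
open Finset
variable {d : ℕ}

lemma part2 (S : Finset (EuclideanSpace ℝ (Fin d))) (hodd : Odd S.card)
    (x : EuclideanSpace ℝ (Fin d))
    (hx : ∀ (c : EuclideanSpace ℝ (Fin d)) (lam : ℝ), c ≠ 0 →
      IsPerfectOdd S c lam → ⟪x, c⟫ = lam) :
    IsWinningPoint S x := by
  apply winning_of
  intro c lam hc hxlam
  by_contra hgt
  push_neg at hgt
  obtain ⟨m, hm⟩ : ∃ m, S.card = 2 * m + 1 := by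
    obtain ⟨k, hk⟩ := hodd; exact ⟨k, by omega⟩
  obtain ⟨c', lam', hc'0, hperf, hxlt⟩ := exists_perfect S m hm x c hc lam hxlam hgt
  exact absurd (hx c' lam' hc'0 hperf) (ne_of_lt hxlt)

/-- for `d ≥ 2` and `|S|` odd, Alice wins iff there is `x ∈ S` contained in every
perfect hyperplane; moreover any such `x` is a winning point. -/
theorem stmt5 (d : ℕ) (hd : 2 ≤ d) (S : Finset (EuclideanSpace ℝ (Fin d)))
    (hodd : Odd S.card) :
    ((∃ a, IsWinningPoint S a) ↔
      ∃ x ∈ S, ∀ (c : EuclideanSpace ℝ (Fin d)) (lam : ℝ), c ≠ 0 →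
        IsPerfectOdd S c lam → ⟪x, c⟫ = lam) ∧
    (∀ x ∈ S,
      (∀ (c : EuclideanSpace ℝ (Fin d)) (lam : ℝ), c ≠ 0 →
        IsPerfectOdd S c lam → ⟪x, c⟫ = lam) →
      IsWinningPoint S x) := by
  classical
  obtain ⟨m, hm⟩ : ∃ m, S.card = 2 * m + 1 := by
    obtain ⟨k, hk⟩ := hodd; exact ⟨k, by omega⟩
  have hS : S.Nonempty := Finset.card_pos.mp (by omega)
  constructor
  · constructor
    · rintro ⟨a, hw⟩
      -- first, a ∈ S
      have haS : a ∈ S := by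
        by_contra haS
        obtain ⟨u, hu⟩ := cover (S.image fun y => y - a) (by
          intro w hw'
          obtain ⟨y, hy, rfl⟩ := Finset.mem_image.mp hw'
          exact sub_ne_zero_of_ne (fun h => haS (h ▸ hy)))
        obtain ⟨y1, hy1⟩ := hS
        have hu0 : u ≠ 0 := by
          intro h0
          exact hu (y1 - a) (Finset.mem_image_of_mem _ hy1) (by rw [h0, inner_zero_right])
        have heq0 : (S.filter fun y => ⟪y, u⟫ = ⟪a, u⟫).card = 0 := by
          rw [Finset.card_eq_zero, Finset.filter_eq_empty_iff]
          intro y hy h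
          exact hu (y - a) (Finset.mem_image_of_mem _ hy)
            (by rw [inner_sub_left, h, sub_self])
        have hp := of_winning S a hw u hu0
        have hn := of_winning S a hw (-u) (neg_ne_zero.mpr hu0)
        have he1 : (S.filter fun y => ⟪a, -u⟫ < ⟪y, -u⟫) = S.filter fun y => ⟪y, u⟫ < ⟪a, u⟫ := by
          apply Finset.filter_congr
          intro y _
          rw [inner_neg_right, inner_neg_right]
          constructor <;> intro <;> linarith
        have he2 : (S.filter fun y => ⟪y, -u⟫ ≤ ⟪a, -u⟫) = S.filter fun y => ⟪a, u⟫ ≤ ⟪y, u⟫ := by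
          apply Finset.filter_congr
          intro y _
          rw [inner_neg_right, inner_neg_right]
          constructor <;> intro <;> linarith
        rw [he1, he2] at hn
        have htri := tri_card S (fun y => ⟪y, u⟫) ⟪a, u⟫
        have hr1 : (S.filter fun y => (fun y => ⟪y, u⟫) y < ⟪a, u⟫)
            = S.filter fun y => ⟪y, u⟫ < ⟪a, u⟫ := rfl
        have hr2 : (S.filter fun y => (fun y => ⟪y, u⟫) y = ⟪a, u⟫)
            = S.filter fun y => ⟪y, u⟫ = ⟪a, u⟫ := rfl
        have hr3 : (S.filter fun y => ⟪a, u⟫ < (fun y => ⟪y, u⟫) y)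
            = S.filter fun y => ⟪a, u⟫ < ⟪y, u⟫ := rfl
        rw [hr1, hr2, hr3] at htri
        have hc1 : (S.filter fun y => ⟪y, u⟫ ≤ ⟪a, u⟫).card
            = (S.filter fun y => ⟪y, u⟫ < ⟪a, u⟫).card
              + (S.filter fun y => ⟪y, u⟫ = ⟪a, u⟫).card := by
          rw [← Finset.card_union_of_disjoint]
          · congr 1
            ext z
            simp only [Finset.mem_filter, Finset.mem_union]
            constructor
            · rintro ⟨hz, hle⟩
              rcases lt_or_eq_of_le hle with h | h
              · exact Or.inl ⟨hz, h⟩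
              · exact Or.inr ⟨hz, h⟩
            · rintro (⟨hz, h⟩ | ⟨hz, h⟩)
              · exact ⟨hz, h.le⟩
              · exact ⟨hz, h.le⟩
          · apply Finset.disjoint_filter_filter'
            exact Set.disjoint_left.mpr fun z hz hz' => absurd hz' (ne_of_lt hz)
        have hc2 : (S.filter fun y => ⟪a, u⟫ ≤ ⟪y, u⟫).card
            = (S.filter fun y => ⟪a, u⟫ < ⟪y, u⟫).card
              + (S.filter fun y => ⟪y, u⟫ = ⟪a, u⟫).card := by
          rw [← Finset.card_union_of_disjoint]
          · congr 1
            ext z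
            simp only [Finset.mem_filter, Finset.mem_union]
            constructor
            · rintro ⟨hz, hle⟩
              rcases lt_or_eq_of_le hle with h | h
              · exact Or.inl ⟨hz, h⟩
              · exact Or.inr ⟨hz, h.symm⟩
            · rintro (⟨hz, h⟩ | ⟨hz, h⟩)
              · exact ⟨hz, h.le⟩
              · exact ⟨hz, h.ge⟩
          · apply Finset.disjoint_filter_filter'
            exact Set.disjoint_left.mpr fun z (hz : ⟪a, u⟫ < ⟪z, u⟫)
              (hz' : ⟪z, u⟫ = ⟪a, u⟫) => absurd hz' (ne_of_gt hz)
        omega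
      -- second, a lies on every perfect hyperplane
      refine ⟨a, haS, fun c lam hc hperf => ?_⟩
      obtain ⟨hgood, heq1⟩ := hperf
      have htri := tri_card S (fun y => ⟪y, c⟫) lam
      have hr1 : (S.filter fun y => (fun y => ⟪y, c⟫) y < lam)
          = S.filter fun y => ⟪y, c⟫ < lam := rfl
      have hr2 : (S.filter fun y => (fun y => ⟪y, c⟫) y = lam)
          = S.filter fun y => ⟪y, c⟫ = lam := rfl
      have hr3 : (S.filter fun y => lam < (fun y => ⟪y, c⟫) y)
          = S.filter fun y => lam < ⟪y, c⟫ := rfl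
      rw [hr1, hr2, hr3] at htri
      have habove : (S.filter fun y => lam < ⟪y, c⟫).card = m := by omega
      have hbelow : (S.filter fun y => ⟪y, c⟫ < lam).card = m := by omega
      rcases lt_trichotomy (⟪a, c⟫ : ℝ) lam with hlt | heq | hgt
      · exfalso
        have hp := of_winning S a hw c hc
        have hsub1 : (S.filter fun y => lam ≤ ⟪y, c⟫) ⊆ S.filter fun y => ⟪a, c⟫ < ⟪y, c⟫ := by
          intro z hz
          obtain ⟨hzS, hzge⟩ := Finset.mem_filter.mp hz
          exact Finset.mem_filter.mpr ⟨hzS, lt_of_lt_of_le hlt hzge⟩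
        have hsub2 : (S.filter fun y => ⟪y, c⟫ ≤ ⟪a, c⟫) ⊆ S.filter fun y => ⟪y, c⟫ < lam := by
          intro z hz
          obtain ⟨hzS, hzle⟩ := Finset.mem_filter.mp hz
          exact Finset.mem_filter.mpr ⟨hzS, lt_of_le_of_lt hzle hlt⟩
        have hge : (S.filter fun y => lam ≤ ⟪y, c⟫).card = m + 1 := by
          have hc2 : (S.filter fun y => lam ≤ ⟪y, c⟫).card
              = (S.filter fun y => lam < ⟪y, c⟫).card
                + (S.filter fun y => ⟪y, c⟫ = lam).card := by
            rw [← Finset.card_union_of_disjoint]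
            · congr 1
              ext z
              simp only [Finset.mem_filter, Finset.mem_union]
              constructor
              · rintro ⟨hz, hle⟩
                rcases lt_or_eq_of_le hle with h | h
                · exact Or.inl ⟨hz, h⟩
                · exact Or.inr ⟨hz, h.symm⟩
              · rintro (⟨hz, h⟩ | ⟨hz, h⟩)
                · exact ⟨hz, h.le⟩
                · exact ⟨hz, h.ge⟩
            · apply Finset.disjoint_filter_filter'
              exact Set.disjoint_left.mpr fun z (hz : lam < ⟪z, c⟫)
                (hz' : ⟪z, c⟫ = lam) => absurd hz' (ne_of_gt hz)
          omega
        have h1 := Finset.card_le_card hsub1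
        have h2 := Finset.card_le_card hsub2
        omega
      · exact heq
      · exfalso
        have hn := of_winning S a hw (-c) (neg_ne_zero.mpr hc)
        have he1 : (S.filter fun y => ⟪a, -c⟫ < ⟪y, -c⟫) = S.filter fun y => ⟪y, c⟫ < ⟪a, c⟫ := by
          apply Finset.filter_congr
          intro y _
          rw [inner_neg_right, inner_neg_right]
          constructor <;> intro <;> linarith
        have he2 : (S.filter fun y => ⟪y, -c⟫ ≤ ⟪a, -c⟫) = S.filter fun y => ⟪a, c⟫ ≤ ⟪y, c⟫ := by
          apply Finset.filter_congr
          intro y _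
          rw [inner_neg_right, inner_neg_right]
          constructor <;> intro <;> linarith
        rw [he1, he2] at hn
        have hsub1 : (S.filter fun y => ⟪y, c⟫ ≤ lam) ⊆ S.filter fun y => ⟪y, c⟫ < ⟪a, c⟫ := by
          intro z hz
          obtain ⟨hzS, hzle⟩ := Finset.mem_filter.mp hz
          exact Finset.mem_filter.mpr ⟨hzS, lt_of_le_of_lt hzle hgt⟩
        have hsub2 : (S.filter fun y => ⟪a, c⟫ ≤ ⟪y, c⟫) ⊆ S.filter fun y => lam < ⟪y, c⟫ := by
          intro z hz
          obtain ⟨hzS, hzge⟩ := Finset.mem_filter.mp hz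
          exact Finset.mem_filter.mpr ⟨hzS, lt_of_lt_of_le hgt hzge⟩
        have hge : (S.filter fun y => ⟪y, c⟫ ≤ lam).card = m + 1 := by
          have hc2 : (S.filter fun y => ⟪y, c⟫ ≤ lam).card
              = (S.filter fun y => ⟪y, c⟫ < lam).card
                + (S.filter fun y => ⟪y, c⟫ = lam).card := by
            rw [← Finset.card_union_of_disjoint]
            · congr 1
              ext z
              simp only [Finset.mem_filter, Finset.mem_union]
              constructor
              · rintro ⟨hz, hle⟩
                rcases lt_or_eq_of_le hle with h | h
                · exact Or.inl ⟨hz, h⟩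
                · exact Or.inr ⟨hz, h⟩
              · rintro (⟨hz, h⟩ | ⟨hz, h⟩)
                · exact ⟨hz, h.le⟩
                · exact ⟨hz, h.le⟩
            · apply Finset.disjoint_filter_filter'
              exact Set.disjoint_left.mpr fun z hz hz' => absurd hz' (ne_of_lt hz)
          omega
        have h1 := Finset.card_le_card hsub1
        have h2 := Finset.card_le_card hsub2
        omega
    · rintro ⟨x, hxS, hx⟩
      exact ⟨x, part2 S hodd x hx⟩
  · intro x _ hx
    exact part2 S hodd x hx

end Main
end

section
/- Let d ≥ 2 and suppose |S| is odd. Then Alice wins if and only if there exists a point x ∈ S such that every line through x is even-balanced about x; moreover, any such x is a winning point for Alice. -/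
open scoped RealInnerProductSpace

open scoped Classical in
/-- The number of points of `S` on the open half-line `{x + t • v : t > 0}`. -/
noncomputable def rayCount {d : ℕ} (S : Finset (EuclideanSpace ℝ (Fin d)))
    (x v : EuclideanSpace ℝ (Fin d)) : ℕ :=
  (S.filter fun y => ∃ t : ℝ, 0 < t ∧ y = x + t • v).card

open scoped Classical

variable {d : ℕ}
local notation "E" => EuclideanSpace ℝ (Fin d)

set_option maxHeartbeats 1000000

lemma dist_lt_iff (a b y : E) :
    dist b y < dist a y ↔ ‖b - a‖^2 < 2 * ⟪y - a, b - a⟫ := by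
  rw [dist_eq_norm, dist_eq_norm, ← Real.sqrt_sq (norm_nonneg (b - y)),
    ← Real.sqrt_sq (norm_nonneg (a - y)), Real.sqrt_lt_sqrt_iff (by positivity)]
  have h1 : ‖b - y‖^2 = ⟪b - y, b - y⟫ := (real_inner_self_eq_norm_sq _).symm
  have h2 : ‖a - y‖^2 = ⟪a - y, a - y⟫ := (real_inner_self_eq_norm_sq _).symm
  have h3 : ‖b - a‖^2 = ⟪b - a, b - a⟫ := (real_inner_self_eq_norm_sq _).symm
  rw [h1, h2, h3]
  simp only [inner_sub_left, inner_sub_right]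
  constructor <;> intro h <;> [skip; skip] <;>
    · have := real_inner_comm a b
      have := real_inner_comm a y
      have := real_inner_comm b y
      linarith

lemma claims_eq (S : Finset E) (a b : E) :
    claims S b a = (S.filter fun y => ‖b - a‖^2 < 2 * ⟪y - a, b - a⟫).card := by
  unfold claims
  congr 1
  apply Finset.filter_congr
  intro y _
  simp [dist_lt_iff]

/-- halfspace count -/
noncomputable def hc (S : Finset E) (a u : E) : ℕ :=
  (S.filter fun y => 0 < ⟪y - a, u⟫).card

lemma dist_lt_iff'_s6 (a b y : E) :
    dist a y < dist b y ↔ 2 * ⟪y - a, b - a⟫ < ‖b - a‖^2 := by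
  rw [dist_lt_iff b a y]
  have h : ⟪y - b, a - b⟫ = -⟪y - a, b - a⟫ + ‖b - a‖^2 := by
    have : ‖b - a‖^2 = ⟪b - a, b - a⟫ := (real_inner_self_eq_norm_sq _).symm
    rw [this]
    have e1 : y - b = (y - a) + (a - b) := by abel
    rw [e1]
    simp only [inner_add_left, inner_sub_left, inner_sub_right]
    have := real_inner_comm a b
    have := real_inner_comm y a
    have := real_inner_comm y b
    ring_nf
  have hn : ‖a - b‖ = ‖b - a‖ := norm_sub_rev a b
  rw [hn, h]
  constructor <;> intro <;> linarith

lemma claims_eq' (S : Finset E) (a b : E) :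
    claims S a b = (S.filter fun y => 2 * ⟪y - a, b - a⟫ < ‖b - a‖^2).card := by
  unfold claims
  congr 1
  apply Finset.filter_congr
  intro y _
  simp [dist_lt_iff'_s6]

lemma win_two_hc (S : Finset E) (a : E)
    (h : ∀ b, claims S b a ≤ claims S a b) (u : E) (hu : u ≠ 0) :
    2 * hc S a u ≤ S.card := by
  set P := S.filter fun y => 0 < ⟪y - a, u⟫ with hP
  have hhc : hc S a u = P.card := rfl
  rcases P.eq_empty_or_nonempty with he | hne
  · rw [hhc, he]; simp
  have hu2 : (0:ℝ) < ‖u‖^2 := by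
    have : 0 < ‖u‖ := norm_pos_iff.mpr hu
    positivity
  set ε := (P.image fun y => ⟪y - a, u⟫).min' (hne.image _) with hε
  have hεpos : 0 < ε := by
    have := Finset.min'_mem (P.image fun y => ⟪y - a, u⟫) (hne.image _)
    rw [← hε] at this
    obtain ⟨y, hy, hyε⟩ := Finset.mem_image.mp this
    rw [hP, Finset.mem_filter] at hy
    linarith [hy.2, hyε ▸ hy.2]
  have hεle : ∀ y ∈ P, ε ≤ ⟪y - a, u⟫ := by
    intro y hy
    exact Finset.min'_le _ _ (Finset.mem_image_of_mem _ hy)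
  set s := ε / ‖u‖^2 with hs
  have hspos : 0 < s := div_pos hεpos hu2
  have hsε : s * ‖u‖^2 = ε := div_mul_cancel₀ _ (ne_of_gt hu2)
  set b := a + s • u with hb
  have hba : b - a = s • u := by rw [hb]; abel
  have key1 : claims S b a = P.card := by
    rw [claims_eq, hba]
    congr 1
    apply Finset.ext
    intro y
    simp only [Finset.mem_filter, hP]
    have e1 : ‖s • u‖^2 = s * ε := by
      rw [norm_smul, Real.norm_eq_abs, mul_pow, sq_abs]
      nlinarith [hsε]
    have e2 : ⟪y - a, s • u⟫ = s * ⟪y - a, u⟫ := real_inner_smul_right _ _ _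
    rw [e1, e2]
    constructor
    · rintro ⟨hyS, hlt⟩
      refine ⟨hyS, ?_⟩
      nlinarith
    · rintro ⟨hyS, hpos⟩
      refine ⟨hyS, ?_⟩
      have : ε ≤ ⟪y - a, u⟫ := hεle y (Finset.mem_filter.mpr ⟨hyS, hpos⟩)
      nlinarith
  have key2 : claims S a b ≤ S.card - P.card := by
    rw [claims_eq', hba]
    have hsub : (S.filter fun y => 2 * ⟪y - a, s • u⟫ < ‖s • u‖^2) ⊆ S \ P := by
      intro y hy
      rw [Finset.mem_filter] at hy
      rw [Finset.mem_sdiff]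
      refine ⟨hy.1, ?_⟩
      intro hyP
      have h1 : ε ≤ ⟪y - a, u⟫ := hεle y hyP
      have e1 : ‖s • u‖^2 = s * ε := by
        rw [norm_smul, Real.norm_eq_abs, mul_pow, sq_abs]
        nlinarith [hsε]
      have e2 : ⟪y - a, s • u⟫ = s * ⟪y - a, u⟫ := real_inner_smul_right _ _ _
      rw [e1, e2] at hy
      nlinarith [hy.2]
    calc (S.filter fun y => 2 * ⟪y - a, s • u⟫ < ‖s • u‖^2).card
        ≤ (S \ P).card := Finset.card_le_card hsub
      _ = S.card - P.card := Finset.card_sdiff_of_subset (Finset.filter_subset _ _)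
  have hPle : P.card ≤ S.card := Finset.card_le_card (Finset.filter_subset _ _)
  have := h b
  rw [key1] at this
  have : P.card ≤ S.card - P.card := le_trans this key2
  rw [hhc]
  omega

lemma two_hc_win (S : Finset E) (a : E)
    (h : ∀ u : E, u ≠ 0 → 2 * hc S a u ≤ S.card) :
    ∀ b, claims S b a ≤ claims S a b := by
  intro b
  by_cases hb : b = a
  · subst hb
    unfold claims
    simp
  have hu : b - a ≠ 0 := sub_ne_zero.mpr hb
  have hu2 : (0:ℝ) < ‖b - a‖^2 := by
    have : 0 < ‖b - a‖ := norm_pos_iff.mpr hu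
    positivity
  set P := S.filter fun y => 0 < ⟪y - a, b - a⟫ with hP
  have h1 : claims S b a ≤ P.card := by
    rw [claims_eq]
    apply Finset.card_le_card
    intro y hy
    rw [Finset.mem_filter] at hy ⊢
    exact ⟨hy.1, by nlinarith [hy.2]⟩
  have h2 : (S.filter fun y => ¬ 0 < ⟪y - a, b - a⟫).card ≤ claims S a b := by
    rw [claims_eq']
    apply Finset.card_le_card
    intro y hy
    rw [Finset.mem_filter] at hy ⊢
    refine ⟨hy.1, ?_⟩
    push_neg at hy
    nlinarith [hy.2]
  have h3 : P.card + (S.filter fun y => ¬ 0 < ⟪y - a, b - a⟫).card = S.card :=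
    Finset.card_filter_add_card_filter_not _
  have h4 : 2 * P.card ≤ S.card := h (b - a) hu
  omega

noncomputable def nrm (x y : E) : E := ‖y - x‖⁻¹ • (y - x)

lemma nrm_spec (x w : E) (hw : ‖w‖ = 1) (y : E) :
    (∃ t : ℝ, 0 < t ∧ y = x + t • w) ↔ (y ≠ x ∧ nrm x y = w) := by
  have hwne : w ≠ 0 := fun h => by simp [h] at hw
  constructor
  · rintro ⟨t, ht, rfl⟩
    have h1 : x + t • w - x = t • w := by abel
    refine ⟨?_, ?_⟩
    · intro h
      have h2 : t • w = 0 := by rw [← h1, h]; abel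
      rcases smul_eq_zero.mp h2 with h3 | h3
      · exact (ne_of_gt ht) h3
      · exact hwne h3
    · unfold nrm
      rw [h1, norm_smul, Real.norm_eq_abs, abs_of_pos ht, hw, mul_one,
        smul_smul, inv_mul_cancel₀ (ne_of_gt ht), one_smul]
  · rintro ⟨hyx, hn⟩
    have hnorm : (0:ℝ) < ‖y - x‖ := norm_pos_iff.mpr (sub_ne_zero.mpr hyx)
    refine ⟨‖y - x‖, hnorm, ?_⟩
    unfold nrm at hn
    have h2 : y - x = ‖y - x‖ • w := by
      rw [← hn, smul_smul, mul_inv_cancel₀ (ne_of_gt hnorm), one_smul]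
    rw [← h2]
    abel

lemma hc_sum (S : Finset E) (x u : E) :
    (S.filter fun y => 0 < ⟪y - x, u⟫).card
      = ∑ w ∈ ((S.filter fun y => 0 < ⟪y - x, u⟫).image (nrm x)), rayCount S x w := by
  set P := S.filter fun y => 0 < ⟪y - x, u⟫ with hP
  rw [Finset.card_eq_sum_card_image (nrm x) P]
  apply Finset.sum_congr rfl
  intro w hwmem
  obtain ⟨y₀, hy₀P, hy₀⟩ := Finset.mem_image.mp hwmem
  have hy₀S := (Finset.mem_filter.mp hy₀P).1
  have hy₀pos := (Finset.mem_filter.mp hy₀P).2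
  have hy₀x : y₀ ≠ x := by
    intro h
    rw [h] at hy₀pos
    simp at hy₀pos
  have hw1 : ‖w‖ = 1 := by
    rw [← hy₀]
    unfold nrm
    rw [norm_smul, Real.norm_eq_abs, abs_of_pos (by
      exact inv_pos.mpr (norm_pos_iff.mpr (sub_ne_zero.mpr hy₀x))),
      inv_mul_cancel₀ (norm_ne_zero_iff.mpr (sub_ne_zero.mpr hy₀x))]
  have hwu : 0 < ⟪w, u⟫ := by
    rw [← hy₀]
    unfold nrm
    rw [real_inner_smul_left]
    exact mul_pos (inv_pos.mpr (norm_pos_iff.mpr (sub_ne_zero.mpr hy₀x))) hy₀pos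
  unfold rayCount
  congr 1
  apply Finset.ext
  intro y
  simp only [Finset.mem_filter, hP]
  constructor
  · rintro ⟨⟨hyS, _⟩, hny⟩
    have hyx : y ≠ x := by
      intro h
      rename_i hpos
      rw [h] at hpos
      simp at hpos
    exact ⟨hyS, (nrm_spec x w hw1 y).mpr ⟨hyx, hny⟩⟩
  · rintro ⟨hyS, hray⟩
    obtain ⟨hyx, hny⟩ := (nrm_spec x w hw1 y).mp hray
    obtain ⟨t, ht, rfl⟩ := hray
    refine ⟨⟨hyS, ?_⟩, hny⟩
    have : x + t • w - x = t • w := by abel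
    rw [this, real_inner_smul_left]
    exact mul_pos ht hwu

lemma mem_image_spec (S : Finset E) (x u : E) (w : E)
    (hw : w ∈ (S.filter fun y => 0 < ⟪y - x, u⟫).image (nrm x)) :
    ‖w‖ = 1 ∧ 0 < ⟪w, u⟫ ∧ 0 < rayCount S x w := by
  obtain ⟨y₀, hy₀P, hy₀⟩ := Finset.mem_image.mp hw
  have hy₀S := (Finset.mem_filter.mp hy₀P).1
  have hy₀pos := (Finset.mem_filter.mp hy₀P).2
  have hy₀x : y₀ ≠ x := by
    intro h; rw [h] at hy₀pos; simp at hy₀pos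
  have hnn : (0:ℝ) < ‖y₀ - x‖ := norm_pos_iff.mpr (sub_ne_zero.mpr hy₀x)
  have hw1 : ‖w‖ = 1 := by
    rw [← hy₀]; unfold nrm
    rw [norm_smul, Real.norm_eq_abs, abs_of_pos (inv_pos.mpr hnn),
      inv_mul_cancel₀ (ne_of_gt hnn)]
  refine ⟨hw1, ?_, ?_⟩
  · rw [← hy₀]; unfold nrm
    rw [real_inner_smul_left]
    exact mul_pos (inv_pos.mpr hnn) hy₀pos
  · unfold rayCount
    rw [Finset.card_pos]
    exact ⟨y₀, Finset.mem_filter.mpr ⟨hy₀S, (nrm_spec x w hw1 y₀).mpr ⟨hy₀x, hy₀⟩⟩⟩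

lemma neg_mem_image (S : Finset E) (x : E)
    (hbal : ∀ v : E, v ≠ 0 → rayCount S x v = rayCount S x (-v)) (u w : E)
    (hw : w ∈ (S.filter fun y => 0 < ⟪y - x, u⟫).image (nrm x)) :
    -w ∈ (S.filter fun y => 0 < ⟪y - x, -u⟫).image (nrm x) := by
  obtain ⟨hw1, hwu, hwrc⟩ := mem_image_spec S x u w hw
  have hwne : w ≠ 0 := fun h => by simp [h] at hw1
  have hrc : 0 < rayCount S x (-w) := by rw [← hbal w hwne]; exact hwrc
  rw [rayCount, Finset.card_pos] at hrc
  obtain ⟨y', hy'⟩ := hrc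
  have hy'2 := Finset.mem_filter.mp hy'
  obtain ⟨hy'S, t, ht, hyt⟩ : y' ∈ S ∧ ∃ t : ℝ, 0 < t ∧ y' = x + t • (-w) := hy'2
  have hnw1 : ‖(-w : E)‖ = 1 := by rw [norm_neg]; exact hw1
  have hspec := (nrm_spec x (-w) hnw1 y').mp ⟨t, ht, hyt⟩
  apply Finset.mem_image.mpr
  refine ⟨y', Finset.mem_filter.mpr ⟨hy'S, ?_⟩, hspec.2⟩
  have h1 : y' - x = t • (-w) := by rw [hyt]; abel
  rw [h1, real_inner_smul_left, inner_neg_neg]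
  exact mul_pos ht hwu

lemma balanced_hc (S : Finset E) (x : E)
    (hbal : ∀ v : E, v ≠ 0 → rayCount S x v = rayCount S x (-v)) (u : E) :
    (S.filter fun y => 0 < ⟪y - x, u⟫).card = (S.filter fun y => ⟪y - x, u⟫ < 0).card := by
  have hNeq : (S.filter fun y => ⟪y - x, u⟫ < 0) = (S.filter fun y => 0 < ⟪y - x, -u⟫) := by
    apply Finset.filter_congr
    intro y _
    simp
  rw [hNeq, hc_sum S x u, hc_sum S x (-u)]
  refine Finset.sum_nbij' (i := fun w => -w) (j := fun w => -w) ?_ ?_ ?_ ?_ ?_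
  · intro a ha
    exact neg_mem_image S x hbal u a ha
  · intro a ha
    have := neg_mem_image S x hbal (-u) a ha
    simpa using this
  · intro a _; simp
  · intro a _; simp
  · intro a ha
    obtain ⟨hw1, _, _⟩ := mem_image_spec S x u a ha
    exact hbal a (fun h => by simp [h] at hw1)

lemma avoid (v : E) (T : Finset E)
    (h : ∀ z ∈ T, ∃ w₀ : E, ⟪v, w₀⟫ = 0 ∧ ⟪z, w₀⟫ ≠ 0) :
    ∃ w : E, ⟪v, w⟫ = 0 ∧ ∀ z ∈ T, ⟪z, w⟫ ≠ 0 := by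
  induction T using Finset.induction_on with
  | empty => exact ⟨0, by simp, by simp⟩
  | @insert z T' hzT' ih =>
    obtain ⟨w, hvw, hw⟩ := ih (fun z' hz' => h z' (Finset.mem_insert_of_mem hz'))
    obtain ⟨w₀, hvw₀, hzw₀⟩ := h z (Finset.mem_insert_self z T')
    set B := (insert z T').image (fun z' => -⟪z', w⟫ / ⟪z', w₀⟫) with hB
    obtain ⟨c, hc⟩ := Infinite.exists_notMem_finset B
    refine ⟨w + c • w₀, by rw [inner_add_right, real_inner_smul_right, hvw, hvw₀]; ring, ?_⟩
    intro z' hz'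
    rw [inner_add_right, real_inner_smul_right]
    rcases Finset.mem_insert.mp hz' with rfl | hmem
    · intro hcontra
      apply hc
      rw [hB]
      refine Finset.mem_image.mpr ⟨z', Finset.mem_insert_self _ _, ?_⟩
      rw [div_eq_iff hzw₀]
      linarith
    · by_cases h0 : ⟪z', w₀⟫ = 0
      · rw [h0]
        simpa using hw z' hmem
      · intro hcontra
        apply hc
        rw [hB]
        refine Finset.mem_image.mpr ⟨z', Finset.mem_insert_of_mem hmem, ?_⟩
        rw [div_eq_iff h0]
        linarith

lemma win_mem (S : Finset E) (hodd : Odd S.card) (a : E)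
    (h : ∀ u : E, u ≠ 0 → 2 * hc S a u ≤ S.card) : a ∈ S := by
  by_contra haS
  have h' : ∀ z ∈ S.image (fun y => y - a), ∃ w₀ : E, ⟪(0:E), w₀⟫ = 0 ∧ ⟪z, w₀⟫ ≠ 0 := by
    intro z hz
    obtain ⟨y, hy, rfl⟩ := Finset.mem_image.mp hz
    have hne : y - a ≠ 0 := sub_ne_zero.mpr (fun hh => haS (hh ▸ hy))
    exact ⟨y - a, by simp, inner_self_ne_zero.mpr hne⟩
  obtain ⟨u, _, hu⟩ := avoid 0 _ h'
  have hSne : S.Nonempty := by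
    rcases hodd with ⟨k, hk⟩
    exact Finset.card_pos.mp (by omega)
  have hune : u ≠ 0 := by
    obtain ⟨y, hy⟩ := hSne
    intro h0
    exact hu (y - a) (Finset.mem_image_of_mem _ hy) (by rw [h0]; simp)
  have h1 := h u hune
  have h2 := h (-u) (neg_ne_zero.mpr hune)
  have hsplit : hc S a u + hc S a (-u) = S.card := by
    have key := Finset.card_filter_add_card_filter_not
      (s := S) (p := fun y => 0 < ⟪y - a, u⟫)
    have heq : S.filter (fun y => ¬ 0 < ⟪y - a, u⟫)
        = S.filter (fun y => 0 < ⟪y - a, -u⟫) := by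
      apply Finset.filter_congr
      intro y hy
      have hne := hu (y - a) (Finset.mem_image_of_mem _ hy)
      simp only [inner_neg_right, neg_pos, not_lt, eq_iff_iff]
      exact ⟨fun h3 => lt_of_le_of_ne h3 hne, le_of_lt⟩
    unfold hc
    rw [← heq]
    exact key
  rcases hodd with ⟨k, hk⟩
  omega

lemma inner_sub_line (a v : E) (t : ℝ) (z : E) : ⟪a + t • v - a, z⟫ = t * ⟪v, z⟫ := by
  have h : a + t • v - a = t • v := by abel
  rw [h, real_inner_smul_left]

lemma key_count (S : Finset E) (a v w : E) (hv : v ≠ 0) (hvw : ⟪v, w⟫ = 0)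
    (ε : ℝ) (hε : 0 < ε)
    (hsep : ∀ y ∈ S, (¬∃ t : ℝ, y = a + t • v) → ε * |⟪y - a, v⟫| < |⟪y - a, w⟫|) :
    (S.filter fun y => 0 < ⟪y - a, w + ε • v⟫).card
      = rayCount S a v
        + (S.filter fun y => (¬∃ t : ℝ, y = a + t • v) ∧ 0 < ⟪y - a, w⟫).card := by
  have hv2 : (0:ℝ) < ⟪v, v⟫ := by
    rw [real_inner_self_eq_norm_sq]
    have : 0 < ‖v‖ := norm_pos_iff.mpr hv
    positivity
  have hexp : ∀ y : E, ⟪y - a, w + ε • v⟫ = ⟪y - a, w⟫ + ε * ⟪y - a, v⟫ := by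
    intro y
    rw [inner_add_right, real_inner_smul_right]
  set P := fun y : E => 0 < ⟪y - a, w + ε • v⟫ with hPdef
  set Q := fun y : E => ∃ t : ℝ, y = a + t • v with hQdef
  have hsplit := Finset.card_filter_add_card_filter_not
    (s := S.filter P) (p := Q)
  rw [Finset.filter_filter, Finset.filter_filter] at hsplit
  have hB : S.filter (fun y => P y ∧ Q y)
      = S.filter (fun y => ∃ t : ℝ, 0 < t ∧ y = a + t • v) := by
    apply Finset.filter_congr
    intro y _
    constructor
    · rintro ⟨hp, t, rfl⟩
      refine ⟨t, ?_, rfl⟩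
      rw [hPdef] at hp
      rw [hexp, inner_sub_line, inner_sub_line, hvw, mul_zero, zero_add] at hp
      by_contra hcon
      push_neg at hcon
      nlinarith [mul_nonneg hε.le (mul_nonneg (neg_nonneg.mpr hcon) hv2.le)]
    · rintro ⟨t, ht, rfl⟩
      refine ⟨?_, t, rfl⟩
      show 0 < ⟪a + t • v - a, w + ε • v⟫
      rw [hexp, inner_sub_line, inner_sub_line, hvw, mul_zero, zero_add]
      positivity
  have hA : S.filter (fun y => P y ∧ ¬ Q y)
      = S.filter (fun y => (¬∃ t : ℝ, y = a + t • v) ∧ 0 < ⟪y - a, w⟫) := by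
    apply Finset.filter_congr
    intro y hy
    constructor
    · rintro ⟨hp, hq⟩
      refine ⟨hq, ?_⟩
      have hs := hsep y hy hq
      rw [hPdef] at hp
      rw [hexp] at hp
      have habs : |ε * ⟪y - a, v⟫| = ε * |⟪y - a, v⟫| := by
        rw [abs_mul, abs_of_pos hε]
      rcases abs_cases (⟪y - a, w⟫) with ⟨h1, _⟩ | ⟨h1, _⟩ <;>
        rcases abs_cases (ε * ⟪y - a, v⟫) with ⟨h2, _⟩ | ⟨h2, _⟩ <;>
        linarith
    · rintro ⟨hq, hp⟩
      refine ⟨?_, hq⟩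
      have hs := hsep y hy hq
      show 0 < ⟪y - a, w + ε • v⟫
      rw [hexp]
      have habs : |ε * ⟪y - a, v⟫| = ε * |⟪y - a, v⟫| := by
        rw [abs_mul, abs_of_pos hε]
      rcases abs_cases (⟪y - a, w⟫) with ⟨h1, _⟩ | ⟨h1, _⟩ <;>
        rcases abs_cases (ε * ⟪y - a, v⟫) with ⟨h2, _⟩ | ⟨h2, _⟩ <;>
        linarith
  rw [hB, hA] at hsplit
  simp only [hPdef] at hsplit
  unfold rayCount
  omega

lemma win_balanced (S : Finset E) (hodd : Odd S.card) (a : E) (haS : a ∈ S)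
    (hchar : ∀ u : E, u ≠ 0 → 2 * hc S a u ≤ S.card) (v : E) (hv : v ≠ 0) :
    rayCount S a v = rayCount S a (-v) := by
  have hv2' : (0:ℝ) < ⟪v, v⟫ := by
    rw [real_inner_self_eq_norm_sq]
    have : 0 < ‖v‖ := norm_pos_iff.mpr hv
    positivity
  set F := S.filter (fun y => ¬∃ t : ℝ, y = a + t • v) with hF
  -- construct w ⟂ v with nonzero inner products against all off-line points
  have h' : ∀ z ∈ F.image (fun y => y - a), ∃ w₀ : E, ⟪v, w₀⟫ = 0 ∧ ⟪z, w₀⟫ ≠ 0 := by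
    intro z hz
    obtain ⟨y, hyF, rfl⟩ := Finset.mem_image.mp hz
    have hyQ : ¬∃ t : ℝ, y = a + t • v := by
      have := Finset.mem_filter.mp hyF
      exact this.2
    set c : ℝ := ⟪y - a, v⟫ / ⟪v, v⟫ with hc
    set w₀ : E := (y - a) - c • v with hw₀
    have hcvv : c * ⟪v, v⟫ = ⟪y - a, v⟫ := div_mul_cancel₀ _ (ne_of_gt hv2')
    have hvw₀ : ⟪v, w₀⟫ = 0 := by
      rw [hw₀, inner_sub_right, real_inner_smul_right]
      have hcomm := real_inner_comm v (y - a)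
      have hcomm' := real_inner_comm (y - a) v
      linarith [hcvv]
    refine ⟨w₀, hvw₀, ?_⟩
    have hkey : ⟪y - a, w₀⟫ = ⟪w₀, w₀⟫ := by
      have hya : y - a = w₀ + c • v := by rw [hw₀]; abel
      nth_rewrite 1 [hya]
      rw [inner_add_left, real_inner_smul_left, hvw₀]
      ring
    rw [hkey]
    apply inner_self_ne_zero.mpr
    intro hw0
    apply hyQ
    refine ⟨c, ?_⟩
    have h2 : (y - a) - c • v = 0 := hw₀ ▸ hw0
    have h1 : y - a = c • v := sub_eq_zero.mp h2
    rw [← h1]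
    abel
  obtain ⟨w, hvw, hw'⟩ := avoid v _ h'
  have hw : ∀ y ∈ S, (¬∃ t : ℝ, y = a + t • v) → ⟪y - a, w⟫ ≠ 0 := by
    intro y hy hq
    exact hw' (y - a) (Finset.mem_image_of_mem _ (Finset.mem_filter.mpr ⟨hy, hq⟩))
  -- choose ε
  have hsep_ex : ∃ ε : ℝ, 0 < ε ∧ ∀ y ∈ S, (¬∃ t : ℝ, y = a + t • v) →
      ε * |⟪y - a, v⟫| < |⟪y - a, w⟫| := by
    rcases F.eq_empty_or_nonempty with hFe | hFne
    · refine ⟨1, one_pos, ?_⟩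
      intro y hy hq
      exfalso
      have hmem : y ∈ F := Finset.mem_filter.mpr ⟨hy, hq⟩
      rw [hFe] at hmem
      simp at hmem
    · set g : E → ℝ := fun y => |⟪y - a, w⟫| / (|⟪y - a, v⟫| + 1) with hg
      set ε := (F.image g).min' (hFne.image _) with hεdef
      have hεpos : 0 < ε := by
        obtain ⟨y, hyF, hyg⟩ := Finset.mem_image.mp (Finset.min'_mem _ (hFne.image g))
        have hyS : y ∈ S := (Finset.mem_filter.mp hyF).1
        have hyQ : ¬∃ t : ℝ, y = a + t • v := (Finset.mem_filter.mp hyF).2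
        have h1 : 0 < |⟪y - a, w⟫| := abs_pos.mpr (hw y hyS hyQ)
        rw [hεdef, ← hyg]
        simp only [hg]
        positivity
      refine ⟨ε, hεpos, ?_⟩
      intro y hy hq
      have hyF : y ∈ F := Finset.mem_filter.mpr ⟨hy, hq⟩
      have hle : ε ≤ g y := Finset.min'_le _ _ (Finset.mem_image_of_mem g hyF)
      have hden : (0:ℝ) < |⟪y - a, v⟫| + 1 := by positivity
      have h2 : ε * (|⟪y - a, v⟫| + 1) ≤ |⟪y - a, w⟫| := by
        rw [hg] at hle
        exact (le_div_iff₀ hden).mp hle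
      nlinarith
  obtain ⟨ε, hε, hsep⟩ := hsep_ex
  -- basic conversion facts
  have hQiff : ∀ y : E, (∃ t : ℝ, y = a + t • (-v)) ↔ (∃ t : ℝ, y = a + t • v) := by
    intro y
    constructor
    · rintro ⟨t, rfl⟩
      exact ⟨-t, by rw [smul_neg, neg_smul]⟩
    · rintro ⟨t, rfl⟩
      exact ⟨-t, by rw [smul_neg, neg_smul, neg_neg]⟩
  have hsep_nv : ∀ y ∈ S, (¬∃ t : ℝ, y = a + t • (-v)) →
      ε * |⟪y - a, -v⟫| < |⟪y - a, w⟫| := by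
    intro y hy hq
    rw [inner_neg_right, abs_neg]
    exact hsep y hy (fun hq' => hq ((hQiff y).mpr hq'))
  have hsep_nw : ∀ y ∈ S, (¬∃ t : ℝ, y = a + t • v) →
      ε * |⟪y - a, v⟫| < |⟪y - a, -w⟫| := by
    intro y hy hq
    rw [inner_neg_right, abs_neg]
    exact hsep y hy hq
  have hsep_nvw : ∀ y ∈ S, (¬∃ t : ℝ, y = a + t • (-v)) →
      ε * |⟪y - a, -v⟫| < |⟪y - a, -w⟫| := by
    intro y hy hq
    rw [inner_neg_right, abs_neg, inner_neg_right (𝕜 := ℝ) (y - a) w, abs_neg]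
    exact hsep y hy (fun hq' => hq ((hQiff y).mpr hq'))
  -- four applications of key_count
  have h1 := key_count S a v w hv hvw ε hε hsep
  have h2 := key_count S a (-v) w (neg_ne_zero.mpr hv)
    (by rw [inner_neg_left, hvw, neg_zero]) ε hε hsep_nv
  have h3 := key_count S a v (-w) hv
    (by rw [inner_neg_right, hvw, neg_zero]) ε hε hsep_nw
  have h4 := key_count S a (-v) (-w) (neg_ne_zero.mpr hv)
    (by rw [inner_neg_left, inner_neg_right, hvw, neg_zero, neg_zero]) ε hε hsep_nvw
  -- nonzero directions
  have hne1 : w + ε • v ≠ 0 := by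
    intro h0
    have h1 : ⟪v, w + ε • v⟫ = ε * ⟪v, v⟫ := by
      rw [inner_add_right, real_inner_smul_right, hvw]; ring
    rw [h0, inner_zero_right] at h1
    nlinarith
  have hne2 : w + ε • (-v) ≠ 0 := by
    intro h0
    have h1 : ⟪v, w + ε • (-v)⟫ = -(ε * ⟪v, v⟫) := by
      rw [inner_add_right, real_inner_smul_right, inner_neg_right, hvw]; ring
    rw [h0, inner_zero_right] at h1
    nlinarith
  have hne3 : -w + ε • v ≠ 0 := by
    intro h0
    have h1 : ⟪v, -w + ε • v⟫ = ε * ⟪v, v⟫ := by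
      rw [inner_add_right, real_inner_smul_right, inner_neg_right, hvw]; ring
    rw [h0, inner_zero_right] at h1
    nlinarith
  have hne4 : -w + ε • (-v) ≠ 0 := by
    intro h0
    have h1 : ⟪v, -w + ε • (-v)⟫ = -(ε * ⟪v, v⟫) := by
      rw [inner_add_right, real_inner_smul_right, inner_neg_right, inner_neg_right, hvw]
      ring
    rw [h0, inner_zero_right] at h1
    nlinarith
  -- the four constraints
  have c1 := hchar _ hne1
  have c2 := hchar _ hne2
  have c3 := hchar _ hne3
  have c4 := hchar _ hne4
  have d1 : hc S a (w + ε • v) = (S.filter fun y => 0 < ⟪y - a, w + ε • v⟫).card := rfl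
  have d2 : hc S a (w + ε • (-v)) = (S.filter fun y => 0 < ⟪y - a, w + ε • (-v)⟫).card := rfl
  have d3 : hc S a (-w + ε • v) = (S.filter fun y => 0 < ⟪y - a, -w + ε • v⟫).card := rfl
  have d4 : hc S a (-w + ε • (-v)) = (S.filter fun y => 0 < ⟪y - a, -w + ε • (-v)⟫).card := rfl
  rw [d1, h1] at c1
  rw [d2, h2] at c2
  rw [d3, h3] at c3
  rw [d4, h4] at c4
  -- convert the (-v) line predicates to v
  have hconv : ∀ z : E, S.filter (fun y => (¬∃ t : ℝ, y = a + t • (-v)) ∧ 0 < ⟪y - a, z⟫)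
      = S.filter (fun y => (¬∃ t : ℝ, y = a + t • v) ∧ 0 < ⟪y - a, z⟫) := by
    intro z
    apply Finset.filter_congr
    intro y _
    simp only [eq_iff_iff, hQiff y]
  rw [hconv w] at c2
  rw [hconv (-w)] at c4
  -- m + m' = F.card
  have e1 : F.filter (fun y => 0 < ⟪y - a, w⟫)
      = S.filter (fun y => (¬∃ t : ℝ, y = a + t • v) ∧ 0 < ⟪y - a, w⟫) := by
    rw [hF, Finset.filter_filter]
  have e2 : F.filter (fun y => ¬ 0 < ⟪y - a, w⟫)
      = S.filter (fun y => (¬∃ t : ℝ, y = a + t • v) ∧ 0 < ⟪y - a, -w⟫) := by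
    rw [hF, Finset.filter_filter]
    apply Finset.filter_congr
    intro y hy
    simp only [inner_neg_right, neg_pos, eq_iff_iff, not_lt]
    constructor
    · rintro ⟨hq, hle⟩
      exact ⟨hq, lt_of_le_of_ne hle (hw y hy hq)⟩
    · rintro ⟨hq, hlt⟩
      exact ⟨hq, le_of_lt hlt⟩
  have hsumF := Finset.card_filter_add_card_filter_not
    (s := F) (p := fun y => 0 < ⟪y - a, w⟫)
  rw [e1, e2] at hsumF
  -- S = F + line
  have hsplitQ := Finset.card_filter_add_card_filter_not
    (s := S) (p := fun y => ∃ t : ℝ, y = a + t • v)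
  rw [← hF] at hsplitQ
  -- line = 1 + p + q
  have hL1 := Finset.card_filter_add_card_filter_not
    (s := S.filter (fun y => ∃ t : ℝ, y = a + t • v))
    (p := fun y => ∃ t : ℝ, 0 < t ∧ y = a + t • v)
  rw [Finset.filter_filter, Finset.filter_filter] at hL1
  have eA : S.filter (fun y => (∃ t : ℝ, y = a + t • v) ∧ ∃ t : ℝ, 0 < t ∧ y = a + t • v)
      = S.filter (fun y => ∃ t : ℝ, 0 < t ∧ y = a + t • v) := by
    apply Finset.filter_congr
    intro y _
    constructor
    · exact fun h => h.2
    · rintro ⟨t, ht, rfl⟩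
      exact ⟨⟨t, rfl⟩, ⟨t, ht, rfl⟩⟩
  rw [eA] at hL1
  have hL2 := Finset.card_filter_add_card_filter_not
    (s := S.filter (fun y => (∃ t : ℝ, y = a + t • v) ∧ ¬∃ t : ℝ, 0 < t ∧ y = a + t • v))
    (p := fun y => ∃ t : ℝ, 0 < t ∧ y = a + t • (-v))
  rw [Finset.filter_filter, Finset.filter_filter] at hL2
  have eB : S.filter (fun y => ((∃ t : ℝ, y = a + t • v) ∧ ¬∃ t : ℝ, 0 < t ∧ y = a + t • v)
        ∧ ∃ t : ℝ, 0 < t ∧ y = a + t • (-v))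
      = S.filter (fun y => ∃ t : ℝ, 0 < t ∧ y = a + t • (-v)) := by
    apply Finset.filter_congr
    intro y _
    constructor
    · exact fun h => h.2
    · rintro ⟨t, ht, rfl⟩
      refine ⟨⟨⟨-t, by rw [smul_neg, neg_smul]⟩, ?_⟩, ⟨t, ht, rfl⟩⟩
      rintro ⟨s, hs, heq⟩
      have h5 : s • v = t • (-v) := (add_left_cancel heq).symm
      rw [smul_neg] at h5
      have h6 : s • v + t • v = 0 := by rw [h5]; abel
      have h7 : (s + t) • v = 0 := by rw [add_smul]; exact h6
      rcases smul_eq_zero.mp h7 with h8 | h8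
      · linarith
      · exact hv h8
  have eC : S.filter (fun y => ((∃ t : ℝ, y = a + t • v) ∧ ¬∃ t : ℝ, 0 < t ∧ y = a + t • v)
        ∧ ¬∃ t : ℝ, 0 < t ∧ y = a + t • (-v)) = {a} := by
    apply Finset.ext
    intro y
    simp only [Finset.mem_filter, Finset.mem_singleton]
    constructor
    · rintro ⟨hyS, ⟨⟨t, rfl⟩, hnp⟩, hnm⟩
      rcases lt_trichotomy t 0 with h | h | h
      · exfalso
        apply hnm
        exact ⟨-t, by linarith, by rw [smul_neg, neg_smul, neg_neg]⟩
      · rw [h, zero_smul, add_zero]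
      · exact absurd ⟨t, h, rfl⟩ hnp
    · rintro rfl
      refine ⟨haS, ⟨⟨0, by rw [zero_smul, add_zero]⟩, ?_⟩, ?_⟩
      · rintro ⟨t, ht, heq⟩
        have h0 : t • v = 0 := (left_eq_add.mp heq)
        rcases smul_eq_zero.mp h0 with h8 | h8
        · linarith
        · exact hv h8
      · rintro ⟨t, ht, heq⟩
        have h0 : t • (-v) = 0 := (left_eq_add.mp heq)
        rcases smul_eq_zero.mp h0 with h8 | h8
        · linarith
        · exact hv (neg_eq_zero.mp h8)
  rw [eB, eC, Finset.card_singleton] at hL2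
  have rc1 : rayCount S a v = (S.filter (fun y => ∃ t : ℝ, 0 < t ∧ y = a + t • v)).card := rfl
  have rc2 : rayCount S a (-v)
      = (S.filter (fun y => ∃ t : ℝ, 0 < t ∧ y = a + t • (-v))).card := rfl
  rw [← rc1] at hL1
  rw [← rc2] at hL2
  obtain ⟨k, hk⟩ := hodd
  omega

/-- for `d ≥ 2` and `|S|` odd, Alice wins iff there is `x ∈ S` such that every
line through `x` is even-balanced about `x` (the two open half-lines contain equally many
points of `S`); moreover any such `x` is a winning point. -/
theorem stmt6 (d : ℕ) (hd : 2 ≤ d) (S : Finset (EuclideanSpace ℝ (Fin d)))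
    (hodd : Odd S.card) :
    ((∃ a, IsWinningPoint S a) ↔
      ∃ x ∈ S, ∀ v : EuclideanSpace ℝ (Fin d), v ≠ 0 →
        rayCount S x v = rayCount S x (-v)) ∧
    (∀ x ∈ S,
      (∀ v : EuclideanSpace ℝ (Fin d), v ≠ 0 →
        rayCount S x v = rayCount S x (-v)) →
      IsWinningPoint S x) := by
  have part2 : ∀ x ∈ S,
      (∀ v : EuclideanSpace ℝ (Fin d), v ≠ 0 →
        rayCount S x v = rayCount S x (-v)) → IsWinningPoint S x := by
    intro x hxS hbal
    intro b
    refine two_hc_win S x ?_ b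
    intro u hu
    have hPN := balanced_hc S x hbal u
    have hsplit := Finset.card_filter_add_card_filter_not
      (s := S) (p := fun y => 0 < ⟪y - x, u⟫)
    have hsub : (S.filter fun y => ⟪y - x, u⟫ < 0) ⊆ (S.filter fun y => ¬ 0 < ⟪y - x, u⟫) := by
      intro y hy
      rw [Finset.mem_filter] at hy ⊢
      exact ⟨hy.1, by linarith [hy.2]⟩
    have hle := Finset.card_le_card hsub
    have hd : hc S x u = (S.filter fun y => 0 < ⟪y - x, u⟫).card := rfl
    rw [hd]
    omega
  constructor
  · constructor
    · rintro ⟨a, ha⟩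
      have hchar : ∀ u : EuclideanSpace ℝ (Fin d), u ≠ 0 → 2 * hc S a u ≤ S.card :=
        fun u hu => win_two_hc S a ha u hu
      have haS : a ∈ S := win_mem S hodd a hchar
      exact ⟨a, haS, fun v hv => win_balanced S hodd a haS hchar v hv⟩
    · rintro ⟨x, hxS, hbal⟩
      exact ⟨x, part2 x hxS hbal⟩
  · exact part2
end

section
/- Let S be a finite set of points in ℝ² with |S| odd. Then the set of slopes m ∈ ℝ for which there is no c ∈ ℝ making the line {(x,y) ∈ ℝ² : y = mx + c} perfect is finite; in other words, a perfect line exists in all but finitely many directions. -/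
/-- The line `{(x,y) ∈ ℝ² : y = m*x + c}` is perfect for an odd-sized `S`:
its two open sides contain equally many points of `S`, and it contains exactly one
point of `S`. -/
noncomputable def IsPerfectSlopeLine (S : Finset (EuclideanSpace ℝ (Fin 2)))
    (m c : ℝ) : Prop :=
  (S.filter fun p => m * p 0 + c < p 1).card = (S.filter fun p => p 1 < m * p 0 + c).card ∧
  (S.filter fun p => p 1 = m * p 0 + c).card = 1

/-- A finite linearly ordered set of odd cardinality has a median. -/
lemma exists_median_s8 {α : Type*} [LinearOrder α] (T : Finset α) (k : ℕ)
    (h : T.card = 2 * k + 1) :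
    ∃ t ∈ T, (T.filter fun x => x < t).card = k ∧ (T.filter fun x => t < x).card = k := by
  classical
  set e := T.orderIsoOfFin h with he
  set t : α := (e ⟨k, by omega⟩ : α) with ht
  refine ⟨t, (e ⟨k, by omega⟩).2, ?_, ?_⟩
  · refine (Finset.card_bij (s := Finset.range k) (t := T.filter fun x => x < t)
        (fun i _ => (e ⟨i % (2*k+1), Nat.mod_lt _ (by omega)⟩ : α)) ?_ ?_ ?_).symm.trans (Finset.card_range k)
    · intro a ha
      simp only [Finset.mem_range] at ha
      refine Finset.mem_filter.mpr ⟨(e _).2, ?_⟩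
      rw [ht]
      have : (⟨a % (2*k+1), Nat.mod_lt _ (by omega)⟩ : Fin (2*k+1)) < ⟨k, by omega⟩ := by
        simp [Fin.lt_def, Nat.mod_eq_of_lt (by omega : a < 2*k+1)]
        omega
      exact_mod_cast e.strictMono this
    · intro a₁ h₁ a₂ h₂ hee
      simp only [Finset.mem_range] at h₁ h₂
      have := e.injective (Subtype.ext hee)
      have := Fin.mk.injEq .. ▸ this
      simpa [Nat.mod_eq_of_lt (by omega : a₁ < 2*k+1),
        Nat.mod_eq_of_lt (by omega : a₂ < 2*k+1)] using this
    · intro b hb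
      obtain ⟨hbT, hbt⟩ := Finset.mem_filter.mp hb
      set i := e.symm ⟨b, hbT⟩ with hi
      have hib : (e i : α) = b := by rw [hi, OrderIso.apply_symm_apply]
      have hik : (i : ℕ) < k := by
        have : e i < e ⟨k, by omega⟩ := by
          rw [hi, OrderIso.apply_symm_apply]
          exact Subtype.mk_lt_mk.mpr hbt
        exact e.lt_iff_lt.mp this
      refine ⟨(i : ℕ), Finset.mem_range.mpr hik, ?_⟩
      have hfin : (⟨(i:ℕ) % (2*k+1), Nat.mod_lt _ (by omega)⟩ : Fin (2*k+1)) = i := by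
        apply Fin.ext
        simp only []
        exact Nat.mod_eq_of_lt i.2
      exact (congrArg (fun j : Fin (2*k+1) => (e j : α)) hfin).trans hib
  · refine (Finset.card_bij (s := Finset.range k) (t := T.filter fun x => t < x)
        (fun i _ => (e ⟨(k+1+i) % (2*k+1), Nat.mod_lt _ (by omega)⟩ : α)) ?_ ?_ ?_).symm.trans (Finset.card_range k)
    · intro a ha
      simp only [Finset.mem_range] at ha
      refine Finset.mem_filter.mpr ⟨(e _).2, ?_⟩
      rw [ht]
      have : (⟨k, by omega⟩ : Fin (2*k+1)) < ⟨(k+1+a) % (2*k+1), Nat.mod_lt _ (by omega)⟩ := by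
        simp [Fin.lt_def, Nat.mod_eq_of_lt (by omega : k+1+a < 2*k+1)]
        omega
      exact_mod_cast e.strictMono this
    · intro a₁ h₁ a₂ h₂ hee
      simp only [Finset.mem_range] at h₁ h₂
      have := e.injective (Subtype.ext hee)
      have := Fin.mk.injEq .. ▸ this
      simp [Nat.mod_eq_of_lt (by omega : k+1+a₁ < 2*k+1),
        Nat.mod_eq_of_lt (by omega : k+1+a₂ < 2*k+1)] at this
      omega
    · intro b hb
      obtain ⟨hbT, hbt⟩ := Finset.mem_filter.mp hb
      set i := e.symm ⟨b, hbT⟩ with hi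
      have hib : (e i : α) = b := by rw [hi, OrderIso.apply_symm_apply]
      have hik : k < (i : ℕ) := by
        have : e ⟨k, by omega⟩ < e i := by
          rw [hi, OrderIso.apply_symm_apply]
          exact Subtype.mk_lt_mk.mpr hbt
        exact e.lt_iff_lt.mp this
      have hilt : (i : ℕ) < 2*k+1 := i.2
      refine ⟨(i : ℕ) - (k+1), Finset.mem_range.mpr (by omega), ?_⟩
      have hfin : (⟨(k+1+((i:ℕ)-(k+1))) % (2*k+1), Nat.mod_lt _ (by omega)⟩ : Fin (2*k+1)) = i := by
        apply Fin.ext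
        simp only []
        rw [Nat.mod_eq_of_lt (by omega)]
        omega
      exact (congrArg (fun j : Fin (2*k+1) => (e j : α)) hfin).trans hib

/-- for `S ⊆ ℝ²` with `|S|` odd, the set of slopes `m` admitting no perfect line
`y = m*x + c` is finite. -/
theorem stmt8 (S : Finset (EuclideanSpace ℝ (Fin 2))) (hodd : Odd S.card) :
    {m : ℝ | ¬ ∃ c : ℝ, IsPerfectSlopeLine S m c}.Finite := by
  classical
  obtain ⟨k, hk⟩ := hodd
  -- the bad set is contained in the finite set of pairwise slopes
  apply Set.Finite.subset (Set.Finite.image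
    (f := fun pq : EuclideanSpace ℝ (Fin 2) × EuclideanSpace ℝ (Fin 2) =>
      (pq.1 1 - pq.2 1) / (pq.1 0 - pq.2 0))
    (Set.finite_coe_iff.mp (by exact Finite.Set.finite_prod _ _ :
      Finite ((S : Set (EuclideanSpace ℝ (Fin 2))) ×ˢ (S : Set (EuclideanSpace ℝ (Fin 2))) :
        Set _))))
  intro m hm
  simp only [Set.mem_setOf_eq] at hm
  by_contra hmem
  -- then f p := p 1 - m * p 0 is injective on S
  set f : EuclideanSpace ℝ (Fin 2) → ℝ := fun p => p 1 - m * p 0 with hf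
  have hinj : Set.InjOn f S := by
    intro p hp q hq hpq
    by_contra hne
    have h0 : p 0 ≠ q 0 := by
      intro h00
      apply hne
      have h11 : p 1 = q 1 := by
        simp only [hf] at hpq
        rw [h00] at hpq
        linarith
      ext i
      fin_cases i <;> assumption
    apply hmem
    refine ⟨(p, q), ⟨hp, hq⟩, ?_⟩
    have hthis : p 1 - q 1 = m * (p 0 - q 0) := by
      simp only [hf] at hpq; linear_combination hpq
    have hsub : p 0 - q 0 ≠ 0 := sub_ne_zero.mpr h0
    simp only []
    rw [div_eq_iff hsub]
    exact hthis
  -- now take the median of the values of f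
  set T := S.image f with hT
  have hTcard : T.card = 2 * k + 1 := by
    rw [hT, Finset.card_image_of_injOn hinj]; exact hk
  obtain ⟨t, htT, hlt, hgt⟩ := exists_median_s8 T k hTcard
  apply hm
  refine ⟨t, ?_, ?_⟩
  · -- equal counts on both sides
    have e1 : (S.filter fun p => m * p 0 + t < p 1) = S.filter fun p => t < f p := by
      apply Finset.filter_congr; intro p _; simp only [hf]; constructor <;> intro <;> linarith
    have e2 : (S.filter fun p => p 1 < m * p 0 + t) = S.filter fun p => f p < t := by
      apply Finset.filter_congr; intro p _; simp only [hf]; constructor <;> intro <;> linarith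
    have c1 : (S.filter fun p => t < f p).card = (T.filter fun x => t < x).card := by
      rw [hT, Finset.filter_image, Finset.card_image_of_injOn
        (hinj.mono (by intro x hx; exact Finset.mem_of_mem_filter x hx))]
    have c2 : (S.filter fun p => f p < t).card = (T.filter fun x => x < t).card := by
      rw [hT, Finset.filter_image, Finset.card_image_of_injOn
        (hinj.mono (by intro x hx; exact Finset.mem_of_mem_filter x hx))]
    rw [e1, e2, c1, c2, hlt, hgt]
  · -- exactly one point on the line
    have e3 : (S.filter fun p => p 1 = m * p 0 + t) = S.filter fun p => f p = t := by
      apply Finset.filter_congr; intro p _; simp only [hf]; constructor <;> intro <;> linarith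
    rw [e3]
    obtain ⟨p, hpS, hpt⟩ := Finset.mem_image.mp (hT ▸ htT)
    rw [Finset.card_eq_one]
    refine ⟨p, ?_⟩
    ext q
    simp only [Finset.mem_filter, Finset.mem_singleton]
    constructor
    · rintro ⟨hqS, hqt⟩
      exact hinj hqS hpS (by rw [hqt, hpt])
    · rintro rfl
      exact ⟨hpS, hpt⟩
end

section
/- Let S be a set of 2n distinct points in ℝ² (n ≥ 1). Then for every point x ∈ S there exists a perfect line through x, i.e. a line l with x ∈ l such that each of the two open half-planes determined by l contains fewer than n points of S. -/
open scoped RealInnerProductSpace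
open Real

noncomputable def dirVec (θ : ℝ) : EuclideanSpace ℝ (Fin 2) := WithLp.toLp 2 ![Real.cos θ, Real.sin θ]

lemma dirVec_ne_zero (θ : ℝ) : dirVec θ ≠ 0 := by
  intro h
  have h0 : dirVec θ 0 = 0 := by rw [h]; rfl
  have h1 : dirVec θ 1 = 0 := by rw [h]; rfl
  simp only [dirVec, PiLp.toLp_apply, Matrix.cons_val_zero, Matrix.cons_val_one, Matrix.head_cons] at h0 h1
  have := Real.sin_sq_add_cos_sq θ
  rw [h0, h1] at this
  norm_num at this

lemma inner_dirVec (y : EuclideanSpace ℝ (Fin 2)) (θ : ℝ) :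
    ⟪y, dirVec θ⟫ = y 0 * Real.cos θ + y 1 * Real.sin θ := by
  simp [PiLp.inner_apply, Fin.sum_univ_two, dirVec, mul_comm]

lemma cont_inner_dirVec (y : EuclideanSpace ℝ (Fin 2)) :
    Continuous fun θ : ℝ => ⟪y, dirVec θ⟫ := by
  simp only [inner_dirVec]
  continuity

lemma dirVec_add_pi (θ : ℝ) : dirVec (θ + π) = -dirVec θ := by
  ext i
  fin_cases i <;>
    simp [dirVec, Real.cos_add_pi, Real.sin_add_pi]

lemma lsc_aux (S : Finset (EuclideanSpace ℝ (Fin 2)))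
    (f g : EuclideanSpace ℝ (Fin 2) → ℝ → ℝ)
    (hf : ∀ y, Continuous (f y)) (hg : ∀ y, Continuous (g y)) (nn : ℕ) :
    IsOpen {θ : ℝ | nn ≤ (S.filter fun y => f y θ < g y θ).card} := by
  classical
  rw [isOpen_iff_mem_nhds]
  intro θ0 hθ0
  set F := S.filter fun y => f y θ0 < g y θ0 with hF
  have hev : ∀ᶠ θ in nhds θ0, ∀ y ∈ F, f y θ < g y θ := by
    rw [Filter.eventually_all_finset]
    intro y hy
    have hmem : θ0 ∈ {θ : ℝ | f y θ < g y θ} := by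
      have := (Finset.mem_filter.mp hy).2
      exact this
    exact (isOpen_lt (hf y) (hg y)).eventually_mem hmem
  filter_upwards [hev] with θ hθ
  have hsub : F ⊆ S.filter fun y => f y θ < g y θ := by
    intro y hy
    exact Finset.mem_filter.mpr ⟨(Finset.mem_filter.mp hy).1, hθ y hy⟩
  calc nn ≤ F.card := hθ0
    _ ≤ _ := Finset.card_le_card hsub

/-- for a set `S` of `2n` distinct points in `ℝ²` (`n ≥ 1`) and any `x ∈ S`, there
is a perfect line through `x`: a line `{y | ⟪y,c⟫ = lam}` containing `x`, each of whose two
open half-planes contains fewer than `n` points of `S`. -/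
theorem stmt9 (n : ℕ) (hn : 1 ≤ n) (S : Finset (EuclideanSpace ℝ (Fin 2)))
    (hcard : S.card = 2 * n) (x : EuclideanSpace ℝ (Fin 2)) (hx : x ∈ S) :
    ∃ (c : EuclideanSpace ℝ (Fin 2)) (lam : ℝ), c ≠ 0 ∧ ⟪x, c⟫ = lam ∧
      (S.filter fun y => lam < ⟪y, c⟫).card < n ∧
      (S.filter fun y => ⟪y, c⟫ < lam).card < n := by
  classical
  by_contra hcon
  push_neg at hcon
  set P : ℝ → ℕ := fun θ =>
    (S.filter fun y => ⟪x, dirVec θ⟫ < ⟪y, dirVec θ⟫).card with hPdef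
  set N : ℝ → ℕ := fun θ =>
    (S.filter fun y => ⟪y, dirVec θ⟫ < ⟪x, dirVec θ⟫).card with hNdef
  -- every direction has a heavy side
  have hcover : ∀ θ, n ≤ P θ ∨ n ≤ N θ := by
    intro θ
    by_cases h : P θ < n
    · exact Or.inr (hcon (dirVec θ) ⟪x, dirVec θ⟫ (dirVec_ne_zero θ) rfl h)
    · exact Or.inl (le_of_not_gt h)
  -- the two sides together miss x
  have hsum : ∀ θ, P θ + N θ < 2 * n := by
    intro θ
    have hdisj : Disjoint (S.filter fun y => ⟪x, dirVec θ⟫ < ⟪y, dirVec θ⟫)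
        (S.filter fun y => ⟪y, dirVec θ⟫ < ⟪x, dirVec θ⟫) := by
      rw [Finset.disjoint_left]
      intro y hy1 hy2
      have h1 := (Finset.mem_filter.mp hy1).2
      have h2 := (Finset.mem_filter.mp hy2).2
      linarith
    have hsub : (S.filter fun y => ⟪x, dirVec θ⟫ < ⟪y, dirVec θ⟫) ∪
        (S.filter fun y => ⟪y, dirVec θ⟫ < ⟪x, dirVec θ⟫) ⊆ S.erase x := by
      intro y hy
      rcases Finset.mem_union.mp hy with h | h
      · refine Finset.mem_erase.mpr ⟨?_, (Finset.mem_filter.mp h).1⟩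
        rintro rfl
        exact lt_irrefl _ (Finset.mem_filter.mp h).2
      · refine Finset.mem_erase.mpr ⟨?_, (Finset.mem_filter.mp h).1⟩
        rintro rfl
        exact lt_irrefl _ (Finset.mem_filter.mp h).2
    have hle := Finset.card_le_card hsub
    rw [Finset.card_union_of_disjoint hdisj, Finset.card_erase_of_mem hx, hcard] at hle
    simp only [hPdef, hNdef]
    omega
  -- antipodal symmetry
  have hPN : ∀ θ, P (θ + π) = N θ := by
    intro θ
    simp only [hPdef, hNdef]
    congr 1
    apply Finset.filter_congr
    intro y _
    rw [dirVec_add_pi, inner_neg_right, inner_neg_right]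
    exact neg_lt_neg_iff
  set U : Set ℝ := {θ | n ≤ P θ} with hUdef
  set V : Set ℝ := {θ | n ≤ N θ} with hVdef
  have hUopen : IsOpen U :=
    lsc_aux S (fun _ θ => ⟪x, dirVec θ⟫) (fun y θ => ⟪y, dirVec θ⟫)
      (fun _ => cont_inner_dirVec x) (fun y => cont_inner_dirVec y) n
  have hVopen : IsOpen V :=
    lsc_aux S (fun y θ => ⟪y, dirVec θ⟫) (fun _ θ => ⟪x, dirVec θ⟫)
      (fun y => cont_inner_dirVec y) (fun _ => cont_inner_dirVec x) n
  have hcompl : Uᶜ = V := by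
    ext θ
    simp only [Set.mem_compl_iff, hUdef, hVdef, Set.mem_setOf_eq, not_le]
    constructor
    · intro h
      rcases hcover θ with h' | h'
      · omega
      · exact h'
    · intro h
      have := hsum θ
      omega
  have hclopen : IsClopen U := by
    constructor
    · rw [← isOpen_compl_iff, hcompl]
      exact hVopen
    · exact hUopen
  rcases isClopen_iff.mp hclopen with h | h
  · -- U empty: but N 0 ≥ n forces π ∈ U
    have h0 : (0 : ℝ) ∈ Uᶜ := by rw [h]; simp
    rw [hcompl] at h0
    have : n ≤ P (0 + π) := by rw [hPN]; exact h0
    have : (0 + π) ∈ U := this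
    rw [h] at this
    exact this
  · -- U = univ : then 0 ∈ U and 0 ∈ V, contradiction
    have h0 : (0 : ℝ) ∈ U := by rw [h]; trivial
    have hπ : (0 + π) ∈ U := by rw [h]; trivial
    have hNV : n ≤ N 0 := by rw [← hPN]; exact hπ
    have := hsum 0
    have hP0 : n ≤ P 0 := h0
    omega
end

section
/- Let d ≥ 2, let S be a finite set of points in ℝ^d, let a ∈ ℝ^d, and let 1 ≤ j ≤ d−1. Let K be an affine subspace of ℝ^d of dimension j with a ∈ K, let K' be an affine subspace of dimension j−1 with a ∈ K' ⊆ K, and let K⁺ be one of the two connected components of K ∖ K'. Let H be an affine hyperplane with K ⊆ H, and let H⁺ be one of the two open half-spaces determined by H. Then there exists b ∈ ℝ^d such that ‖b−x‖ < ‖a−x‖ for every x ∈ S ∩ (H⁺ ∪ K⁺); i.e., Bob can claim all the points of S that belong to H⁺ ∪ K⁺. -/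
open scoped RealInnerProductSpace

lemma step_lemma_aux {E : Type*} [NormedAddCommGroup E] [InnerProductSpace ℝ E]
    (a x w : E) (h : 0 < ⟪w, x - a⟫) :
    ∀ᶠ ε in nhdsWithin (0:ℝ) (Set.Ioi 0), dist (a + ε • w) x < dist a x := by
  have tend : Filter.Tendsto (fun ε : ℝ => ε * ‖w‖^2) (nhdsWithin 0 (Set.Ioi 0)) (nhds 0) := by
    have h0 : Filter.Tendsto (fun ε : ℝ => ε * ‖w‖^2) (nhds 0) (nhds 0) := by
      simpa using (by fun_prop : Continuous fun ε : ℝ => ε * ‖w‖^2).tendsto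
        (0:ℝ)
    exact h0.mono_left nhdsWithin_le_nhds
  have h1 := tend.eventually_lt_const (by positivity : (0:ℝ) < 2 * ⟪w, x - a⟫)
  filter_upwards [h1, self_mem_nhdsWithin] with ε hε hε0
  rw [Set.mem_Ioi] at hε0
  rw [dist_eq_norm, dist_eq_norm]
  apply lt_of_pow_lt_pow_left₀ 2 (norm_nonneg _)
  have key : a + ε • w - x = (a - x) + ε • w := by abel
  rw [key, norm_add_sq_real]
  have h2 : ⟪a - x, ε • w⟫ = -(ε * ⟪w, x - a⟫) := by
    rw [real_inner_smul_right, real_inner_comm]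
    have : ⟪w, a - x⟫ = -⟪w, x - a⟫ := by
      rw [← inner_neg_right]; congr 1; abel
    rw [this]; ring
  rw [h2, norm_smul]
  have h3 : (‖ε‖ * ‖w‖)^2 = ε^2 * ‖w‖^2 := by
    rw [mul_pow, Real.norm_eq_abs, sq_abs]
  rw [h3]
  nlinarith [h, hε, hε0]

/-- let `K` be a `j`-dimensional affine subspace through `a`, `K'` a
`(j-1)`-dimensional affine subspace through `a` contained in `K`, `K⁺` one of the two connected
components of `K \ K'`, and `H = {y | ⟪y,c⟫ = lam}` a hyperplane containing `K`, with open
half-space `H⁺ = {y | ⟪y,c⟫ > lam}`.  Then Bob can claim every point of `S ∩ (H⁺ ∪ K⁺)`: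
there is `b` strictly closer than `a` to all such points. -/
theorem stmt11 (d : ℕ) (hd : 2 ≤ d) (S : Finset (EuclideanSpace ℝ (Fin d)))
    (a : EuclideanSpace ℝ (Fin d)) (j : ℕ) (hj1 : 1 ≤ j) (hj2 : j ≤ d - 1)
    (K K' : AffineSubspace ℝ (EuclideanSpace ℝ (Fin d)))
    (hKdim : Module.finrank ℝ K.direction = j)
    (hK'dim : Module.finrank ℝ K'.direction = j - 1)
    (haK' : a ∈ K') (hK'K : K' ≤ K)
    (Kplus : Set (EuclideanSpace ℝ (Fin d)))
    (hKplus : ∃ z ∈ (K : Set (EuclideanSpace ℝ (Fin d))) \ K',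
      Kplus = connectedComponentIn ((K : Set (EuclideanSpace ℝ (Fin d))) \ K') z)
    (c : EuclideanSpace ℝ (Fin d)) (lam : ℝ) (hc : c ≠ 0)
    (hKH : (K : Set (EuclideanSpace ℝ (Fin d))) ⊆ {y | ⟪y, c⟫ = lam}) :
    ∃ b : EuclideanSpace ℝ (Fin d), ∀ x ∈ S,
      (lam < ⟪x, c⟫ ∨ x ∈ Kplus) → dist b x < dist a x := by
  set V := K.direction with hV
  set W := K'.direction with hW
  have haK : a ∈ K := hK'K haK'
  have hWV : W ≤ V := AffineSubspace.direction_le hK'K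
  obtain ⟨z, hz, hKpl⟩ := hKplus
  -- membership criteria
  have hmemK : ∀ x : EuclideanSpace ℝ (Fin d), x ∈ K ↔ x - a ∈ V := by
    intro x
    rw [← AffineSubspace.vsub_right_mem_direction_iff_mem haK, vsub_eq_sub]
  have hmemK' : ∀ x : EuclideanSpace ℝ (Fin d), x ∈ K' ↔ x - a ∈ W := by
    intro x
    rw [← AffineSubspace.vsub_right_mem_direction_iff_mem haK', vsub_eq_sub]
  -- find u₀
  have hdimlt : Module.finrank ℝ W < Module.finrank ℝ V := by
    rw [hKdim, hK'dim]; omega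
  have hWltV : W < V := lt_of_le_of_ne hWV (fun h => by rw [h] at hdimlt; omega)
  obtain ⟨v, hvV, hvW⟩ := SetLike.exists_of_lt hWltV
  set u₀ : EuclideanSpace ℝ (Fin d) := v - (W.orthogonalProjectionOnto v : EuclideanSpace ℝ (Fin d))
    with hu₀def
  have hu₀V : u₀ ∈ V := V.sub_mem hvV (hWV (W.orthogonalProjectionOnto v).2)
  have hu₀W : ∀ w ∈ W, ⟪u₀, w⟫ = 0 := fun w hw =>
    W.starProjection_inner_eq_zero v w hw
  have hu₀ne : u₀ ≠ 0 := by
    intro h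
    apply hvW
    have hv : v = (W.orthogonalProjectionOnto v : EuclideanSpace ℝ (Fin d)) := sub_eq_zero.mp h
    rw [hv]; exact (W.orthogonalProjectionOnto v).2
  have hnorm : 0 < ‖u₀‖^2 := pow_pos (norm_pos_iff.2 hu₀ne) 2
  -- key fact
  have key : ∀ x ∈ V, ⟪u₀, x⟫ = 0 → x ∈ W := by
    have hinf : W ⊓ (ℝ ∙ u₀) = ⊥ := by
      rw [Submodule.eq_bot_iff]
      rintro y ⟨hyW, hyU⟩
      obtain ⟨t, rfl⟩ := Submodule.mem_span_singleton.1 hyU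
      have h0 := hu₀W _ hyW
      rw [real_inner_smul_right, real_inner_self_eq_norm_sq] at h0
      have ht : t = 0 := by
        rcases mul_eq_zero.1 h0 with h | h
        · exact h
        · exfalso; nlinarith
      simp [ht]
    have hsup : W ⊔ (ℝ ∙ u₀) = V := by
      apply Submodule.eq_of_le_of_finrank_le
        (sup_le hWV ((Submodule.span_singleton_le_iff_mem _ _).2 hu₀V))
      have hd1 := Submodule.finrank_sup_add_finrank_inf_eq W (ℝ ∙ u₀)
      rw [hinf] at hd1
      have h1 : Module.finrank ℝ (ℝ ∙ u₀) = 1 := finrank_span_singleton hu₀ne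
      have hb : Module.finrank ℝ (⊥ : Submodule ℝ (EuclideanSpace ℝ (Fin d))) = 0 :=
        finrank_bot ℝ (EuclideanSpace ℝ (Fin d))
      rw [h1, hb, hK'dim] at hd1
      rw [hKdim]
      omega
    intro x hxV hinner
    rw [← hsup] at hxV
    obtain ⟨w, hw, y, hy, rfl⟩ := Submodule.mem_sup.1 hxV
    obtain ⟨t, rfl⟩ := Submodule.mem_span_singleton.1 hy
    rw [inner_add_right, hu₀W _ hw, real_inner_smul_right, real_inner_self_eq_norm_sq,
      zero_add] at hinner
    have ht : t = 0 := by
      rcases mul_eq_zero.1 hinner with h | h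
      · exact h
      · exfalso; nlinarith
    rw [ht]; simpa using hw
  -- z properties
  have hzV : z - a ∈ V := (hmemK z).1 hz.1
  have hzW : z - a ∉ W := fun h => hz.2 ((hmemK' z).2 h)
  have ht₀ : ⟪u₀, z - a⟫ ≠ 0 := fun h => hzW (key _ hzV h)
  -- choose sign
  obtain ⟨u, huV, hukey, hupos⟩ :
      ∃ u : EuclideanSpace ℝ (Fin d), u ∈ V ∧ (∀ x ∈ V, ⟪u, x⟫ = 0 → x ∈ W) ∧
        0 < ⟪u, z - a⟫ := by
    rcases ht₀.lt_or_gt with h | h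
    · refine ⟨-u₀, V.neg_mem hu₀V, ?_, ?_⟩
      · intro x hx hinner
        apply key x hx
        rw [inner_neg_left] at hinner
        linarith
      · rw [inner_neg_left]; linarith
    · exact ⟨u₀, hu₀V, key, h⟩
  -- topological containment
  have hKplus_sub : ∀ x ∈ Kplus, x ∈ K ∧ 0 < ⟪u, x - a⟫ := by
    have hopenP : IsOpen {x : EuclideanSpace ℝ (Fin d) | 0 < ⟪u, x - a⟫} :=
      isOpen_lt continuous_const (Continuous.inner continuous_const
        (continuous_id.sub continuous_const))
    have hopenN : IsOpen {x : EuclideanSpace ℝ (Fin d) | ⟪u, x - a⟫ < 0} :=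
      isOpen_lt (Continuous.inner continuous_const
        (continuous_id.sub continuous_const)) continuous_const
    have hdisj : Disjoint {x : EuclideanSpace ℝ (Fin d) | 0 < ⟪u, x - a⟫}
        {x : EuclideanSpace ℝ (Fin d) | ⟪u, x - a⟫ < 0} := by
      rw [Set.disjoint_left]
      intro x hx hx'
      simp only [Set.mem_setOf_eq] at hx hx'
      linarith
    have hsub : (K : Set (EuclideanSpace ℝ (Fin d))) \ K' ⊆
        {x : EuclideanSpace ℝ (Fin d) | 0 < ⟪u, x - a⟫} ∪
        {x : EuclideanSpace ℝ (Fin d) | ⟪u, x - a⟫ < 0} := by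
      rintro x ⟨hxK, hxK'⟩
      have hxV : x - a ∈ V := (hmemK x).1 hxK
      have hne : ⟪u, x - a⟫ ≠ 0 := fun h => hxK' ((hmemK' x).2 (hukey _ hxV h))
      rcases hne.lt_or_gt with h | h
      · exact Or.inr h
      · exact Or.inl h
    have hpre : IsPreconnected Kplus := by
      rw [hKpl]; exact isPreconnected_connectedComponentIn
    have hKplus_s : Kplus ⊆ (K : Set (EuclideanSpace ℝ (Fin d))) \ K' := by
      rw [hKpl]; exact connectedComponentIn_subset _ _
    have hzK : z ∈ Kplus := by rw [hKpl]; exact mem_connectedComponentIn hz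
    have hleft := hpre.subset_left_of_subset_union hopenP hopenN hdisj
      (hKplus_s.trans hsub) ⟨z, hzK, hupos⟩
    exact fun x hx => ⟨(hKplus_s hx).1, hleft hx⟩
  -- a is on the hyperplane
  have haH : ⟪a, c⟫ = lam := hKH haK
  -- choose C
  have hCev : ∀ᶠ C in nhdsWithin (0:ℝ) (Set.Ioi 0),
      ∀ x ∈ S, lam < ⟪x, c⟫ → C * |⟪u, x - a⟫| < ⟪x, c⟫ - lam := by
    rw [Filter.eventually_all_finset]
    intro x hx
    by_cases hcond : lam < ⟪x, c⟫
    · have tend : Filter.Tendsto (fun C : ℝ => C * |⟪u, x - a⟫|)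
          (nhdsWithin 0 (Set.Ioi 0)) (nhds 0) := by
        have h0 : Filter.Tendsto (fun C : ℝ => C * |⟪u, x - a⟫|) (nhds 0) (nhds 0) := by
          simpa using (by fun_prop : Continuous fun C : ℝ => C * |⟪u, x - a⟫|).tendsto (0:ℝ)
        exact h0.mono_left nhdsWithin_le_nhds
      filter_upwards [tend.eventually_lt_const (by linarith : (0:ℝ) < ⟪x, c⟫ - lam)] with C h1
      exact fun _ => h1
    · filter_upwards with C h
      exact absurd h hcond
  obtain ⟨C, hCspec, hC0⟩ := (hCev.and self_mem_nhdsWithin).exists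
  replace hC0 : (0:ℝ) < C := hC0
  set w : EuclideanSpace ℝ (Fin d) := c + C • u with hwdef
  -- positivity of inner products
  have hkeyx : ∀ x ∈ S, (lam < ⟪x, c⟫ ∨ x ∈ Kplus) → 0 < ⟪w, x - a⟫ := by
    intro x hx hcond
    have hexp : ⟪w, x - a⟫ = (⟪x, c⟫ - lam) + C * ⟪u, x - a⟫ := by
      rw [hwdef, inner_add_left, real_inner_smul_left]
      congr 1
      rw [real_inner_comm, inner_sub_left, haH]
    rw [hexp]
    rcases hcond with h | h
    · have h1 := hCspec x hx h
      have h2 : -(C * |⟪u, x - a⟫|) ≤ C * ⟪u, x - a⟫ := by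
        have := neg_abs_le ⟪u, x - a⟫
        nlinarith
      linarith
    · obtain ⟨hxK, hxu⟩ := hKplus_sub x h
      have hxH : ⟪x, c⟫ = lam := hKH hxK
      rw [hxH]
      have hpos : 0 < C * ⟪u, x - a⟫ := mul_pos hC0 hxu
      linarith
  -- final eventuality
  have hev : ∀ᶠ ε in nhdsWithin (0:ℝ) (Set.Ioi 0), ∀ x ∈ S,
      (lam < ⟪x, c⟫ ∨ x ∈ Kplus) → dist (a + ε • w) x < dist a x := by
    rw [Filter.eventually_all_finset]
    intro x hx
    by_cases hcond : lam < ⟪x, c⟫ ∨ x ∈ Kplus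
    · filter_upwards [step_lemma_aux a x w (hkeyx x hx hcond)] with ε h
      exact fun _ => h
    · filter_upwards with ε h
      exact absurd h hcond
  obtain ⟨ε, hε⟩ := hev.exists
  exact ⟨a + ε • w, hε⟩
end
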